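/- arXiv:2003.00371 — 4 statements merged into one kernel-verified Lean document; each statement's English description precedes it below -/
import Mathlib

section
/- Let Ω* be the minimizer of F(Ω) = tr(S̃Ω) − log det(Ω) + γ1‖Ω‖₁ + γ2‖Ω‖_F² over the set of p×p symmetric positive definite matrices, with γ1 > 0 and γ2 > 0. Then αI ⪯ Ω* ⪯ βI, where α⁻¹ = (ρ_1(S̃) + γ1·p + √((ρ_1(S̃) + γ1·p)² + 8γ2))/2 and β⁻¹ = (ρ_p(S̃) − γ1·p + √((ρ_p(S̃) − γ1·p)² + 8γ2))/2. -/
open Matrix BigOperators Kronecker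

/-- Frobenius norm of a real matrix. -/
noncomputable def frobNorm {n : Type*} [Fintype n] (A : Matrix n n ℝ) : ℝ :=
  Real.sqrt (∑ i, ∑ j, (A i j)^2)

/-- Entrywise L1 norm of a real matrix. -/
noncomputable def l1Norm {n : Type*} [Fintype n] (A : Matrix n n ℝ) : ℝ :=
  ∑ i, ∑ j, |A i j|

/-- Spectral (ℓ2 operator) norm of a real matrix. -/
noncomputable def specNorm {n : Type*} [Fintype n] [DecidableEq n] (A : Matrix n n ℝ) : ℝ :=
  ‖Matrix.toEuclideanCLM (𝕜 := ℝ) A‖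

/-- Largest eigenvalue ρ₁(A) of a symmetric real matrix (junk value 0 otherwise). -/
noncomputable def maxEig {n : Type*} [Fintype n] [DecidableEq n] (A : Matrix n n ℝ) : ℝ :=
  if h : A.IsHermitian then ⨆ i, h.eigenvalues i else 0

/-- Smallest eigenvalue ρ_p(A) of a symmetric real matrix (junk value 0 otherwise). -/
noncomputable def minEig {n : Type*} [Fintype n] [DecidableEq n] (A : Matrix n n ℝ) : ℝ :=
  if h : A.IsHermitian then ⨅ i, h.eigenvalues i else 0

/-- Loewner order: A ⪯ B iff B - A is positive semidefinite. -/
def loewnerLE {n : Type*} [Fintype n] (A B : Matrix n n ℝ) : Prop := (B - A).PosSemidef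

/-- Entrywise soft-thresholding operator. -/
noncomputable def Sft {n : Type*} (A : Matrix n n ℝ) (τ : ℝ) : Matrix n n ℝ :=
  Matrix.of fun i j => Real.sign (A i j) * max (|A i j| - τ) 0

/-- The elastic-net penalized Gaussian likelihood objective
  F(Ω) = tr(S̃Ω) − log det Ω + γ1‖Ω‖₁ + γ2‖Ω‖_F². -/
noncomputable def genObj {n : Type*} [Fintype n] [DecidableEq n]
    (S : Matrix n n ℝ) (γ1 γ2 : ℝ) (Ω : Matrix n n ℝ) : ℝ :=
  (S * Ω).trace - Real.log Ω.det + γ1 * l1Norm Ω + γ2 * (frobNorm Ω)^2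

section Aux

open Filter Set Topology

variable {p : ℕ}

lemma smul_one_sub_psd (A : Matrix (Fin p) (Fin p) ℝ) (hA : A.IsHermitian) (c : ℝ)
    (h : ∀ i, hA.eigenvalues i ≤ c) : (c • (1 : Matrix (Fin p) (Fin p) ℝ) - A).PosSemidef := by
  set U := (hA.eigenvectorUnitary : Matrix (Fin p) (Fin p) ℝ) with hUdef
  have hU : U * star U = 1 := Matrix.mem_unitaryGroup_iff.mp hA.eigenvectorUnitary.2
  have key : c • (1 : Matrix (Fin p) (Fin p) ℝ) - A
      = U * diagonal (fun i => c - hA.eigenvalues i) * star U := by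
    conv_lhs => rw [hA.spectral_theorem, Unitary.conjStarAlgAut_apply]
    have h1 : c • (1 : Matrix (Fin p) (Fin p) ℝ) = U * (c • (1 : Matrix (Fin p) (Fin p) ℝ)) * star U := by
      rw [Matrix.mul_smul, Matrix.mul_one, Matrix.smul_mul, hU]
    rw [h1, ← Matrix.sub_mul, ← Matrix.mul_sub]
    congr 1
    congr 1
    ext i j
    by_cases hij : i = j <;>
      simp [hij, Matrix.diagonal_apply, Matrix.one_apply, RCLike.ofReal]
  rw [key]
  exact (Matrix.posSemidef_diagonal_iff.mpr fun i => sub_nonneg.2 (h i)).mul_mul_conjTranspose_same U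

lemma sub_smul_one_psd (A : Matrix (Fin p) (Fin p) ℝ) (hA : A.IsHermitian) (c : ℝ)
    (h : ∀ i, c ≤ hA.eigenvalues i) : (A - c • (1 : Matrix (Fin p) (Fin p) ℝ)).PosSemidef := by
  set U := (hA.eigenvectorUnitary : Matrix (Fin p) (Fin p) ℝ) with hUdef
  have hU : U * star U = 1 := Matrix.mem_unitaryGroup_iff.mp hA.eigenvectorUnitary.2
  have key : A - c • (1 : Matrix (Fin p) (Fin p) ℝ)
      = U * diagonal (fun i => hA.eigenvalues i - c) * star U := by
    conv_lhs => rw [hA.spectral_theorem, Unitary.conjStarAlgAut_apply]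
    have h1 : c • (1 : Matrix (Fin p) (Fin p) ℝ) = U * (c • (1 : Matrix (Fin p) (Fin p) ℝ)) * star U := by
      rw [Matrix.mul_smul, Matrix.mul_one, Matrix.smul_mul, hU]
    rw [h1, ← Matrix.sub_mul, ← Matrix.mul_sub]
    congr 1
    congr 1
    ext i j
    by_cases hij : i = j <;>
      simp [hij, Matrix.diagonal_apply, Matrix.one_apply, RCLike.ofReal]
  rw [key]
  exact (Matrix.posSemidef_diagonal_iff.mpr fun i => sub_nonneg.2 (h i)).mul_mul_conjTranspose_same U

lemma psd_quad {M : Matrix (Fin p) (Fin p) ℝ} (hM : M.PosSemidef) (x : Fin p → ℝ) :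
    0 ≤ x ⬝ᵥ (M *ᵥ x) := by
  simpa using hM.dotProduct_mulVec_nonneg x

lemma quad_le (A : Matrix (Fin p) (Fin p) ℝ) (hA : A.IsHermitian) (c : ℝ)
    (h : ∀ i, hA.eigenvalues i ≤ c) (x : Fin p → ℝ) :
    x ⬝ᵥ (A *ᵥ x) ≤ c * (∑ j, (x j)^2) := by
  have := psd_quad (smul_one_sub_psd A hA c h) x
  have hx : x ⬝ᵥ ((c • (1 : Matrix (Fin p) (Fin p) ℝ)) *ᵥ x) = c * ∑ j, (x j)^2 := by
    simp [Matrix.smul_mulVec, dotProduct, Finset.mul_sum, pow_two]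
    exact Finset.sum_congr rfl fun i _ => by ring
  rw [Matrix.sub_mulVec, dotProduct_sub, hx] at this
  linarith

lemma le_quad (A : Matrix (Fin p) (Fin p) ℝ) (hA : A.IsHermitian) (c : ℝ)
    (h : ∀ i, c ≤ hA.eigenvalues i) (x : Fin p → ℝ) :
    c * (∑ j, (x j)^2) ≤ x ⬝ᵥ (A *ᵥ x) := by
  have := psd_quad (sub_smul_one_psd A hA c h) x
  have hx : x ⬝ᵥ ((c • (1 : Matrix (Fin p) (Fin p) ℝ)) *ᵥ x) = c * ∑ j, (x j)^2 := by
    simp [Matrix.smul_mulVec, dotProduct, Finset.mul_sum, pow_two]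
    exact Finset.sum_congr rfl fun i _ => by ring
  rw [Matrix.sub_mulVec, dotProduct_sub, hx] at this
  linarith

lemma slope_limit {b K C δ : ℝ} (hδ : 0 < δ)
    (h : ∀ s ∈ Set.Ioo (0:ℝ) δ, Real.log (1 + s*b) ≤ s*K + C*s^2) : b ≤ K := by
  have h1 : HasDerivAt (fun s : ℝ => 1 + s*b) b 0 := by
    simpa using ((hasDerivAt_id (0:ℝ)).mul_const b).const_add 1
  have h2 : HasDerivAt (fun s => Real.log (1 + s*b)) b 0 := by
    have := (Real.hasDerivAt_log (by norm_num : (1:ℝ) + 0*b ≠ 0)).comp 0 h1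
    simpa [Function.comp_def] using this
  rw [hasDerivAt_iff_tendsto_slope] at h2
  have h3 : Tendsto (slope (fun s => Real.log (1+s*b)) 0) (𝓝[>] 0) (𝓝 b) :=
    h2.mono_left (nhdsWithin_mono _ (fun x hx => ne_of_gt hx))
  have h4 : Tendsto (fun s : ℝ => K + C*s) (𝓝[>] 0) (𝓝 K) := by
    have : Tendsto (fun s : ℝ => K + C*s) (𝓝 0) (𝓝 (K + C*0)) :=
      (continuous_const.add (continuous_const.mul continuous_id)).tendsto 0
    simpa using this.mono_left nhdsWithin_le_nhds
  refine le_of_tendsto_of_tendsto h3 h4 ?_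
  filter_upwards [Ioo_mem_nhdsGT_of_mem (Set.mem_Ico.mpr ⟨le_refl (0:ℝ), hδ⟩)] with s hs
  have hs0 : 0 < s := hs.1
  have := h s hs
  rw [slope_def_field]
  simp only [Real.log_one, zero_mul, add_zero, mul_zero, sub_zero]
  rw [div_le_iff₀ hs0]
  calc Real.log (1 + s*b) ≤ s*K + C*s^2 := this
    _ = (K + C*s) * s := by ring

lemma l1_pert_le (A E : Matrix (Fin p) (Fin p) ℝ) (t : ℝ) :
    l1Norm (A + t • E) ≤ l1Norm A + |t| * l1Norm E := by
  simp only [l1Norm, Finset.mul_sum, ← Finset.sum_add_distrib]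
  refine Finset.sum_le_sum fun i _ => Finset.sum_le_sum fun j _ => ?_
  calc |(A + t • E) i j| = |A i j + t * E i j| := by simp [Matrix.add_apply]
    _ ≤ |A i j| + |t * E i j| := abs_add_le _ _
    _ = |A i j| + |t| * |E i j| := by rw [abs_mul]

lemma l1_vecMulVec_le (v : Fin p → ℝ) (hv : ∑ j, (v j)^2 = 1) :
    l1Norm (vecMulVec v v) ≤ (p : ℝ) := by
  have h1 : l1Norm (vecMulVec v v) = (∑ i, |v i|)^2 := by
    simp only [l1Norm, vecMulVec_apply, abs_mul, pow_two, Finset.sum_mul, Finset.mul_sum]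
    exact Finset.sum_congr rfl fun i _ => Finset.sum_congr rfl fun j _ => mul_comm _ _
  have h2 : (∑ i, |v i|)^2 ≤ (∑ i, |v i|^2) * (∑ _i : Fin p, (1:ℝ)^2) := by
    have := Finset.sum_mul_sq_le_sq_mul_sq Finset.univ (fun i => |v i|) (fun _ => (1:ℝ))
    simpa using this
  rw [h1]
  calc (∑ i, |v i|)^2 ≤ (∑ i, |v i|^2) * (∑ _i : Fin p, (1:ℝ)^2) := h2
    _ = 1 * p := by rw [show (∑ i, |v i|^2) = ∑ i, (v i)^2 from by simp [sq_abs], hv]; simp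
    _ = p := one_mul _

lemma frob_sq (A : Matrix (Fin p) (Fin p) ℝ) : (frobNorm A)^2 = ∑ i, ∑ j, (A i j)^2 :=
  Real.sq_sqrt (Finset.sum_nonneg fun i _ => Finset.sum_nonneg fun j _ => sq_nonneg _)

lemma trace_mul_vecMulVec (S : Matrix (Fin p) (Fin p) ℝ) (v : Fin p → ℝ) :
    (S * vecMulVec v v).trace = v ⬝ᵥ (S *ᵥ v) := by
  simp only [Matrix.trace, Matrix.diag, Matrix.mul_apply, vecMulVec_apply, dotProduct,
    Matrix.mulVec, Finset.mul_sum]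
  exact Finset.sum_congr rfl fun i _ => Finset.sum_congr rfl fun j _ => by ring

lemma vecMulVec_mulVec (v x : Fin p → ℝ) : vecMulVec v v *ᵥ x = (v ⬝ᵥ x) • v := by
  ext i
  simp only [Matrix.mulVec, vecMulVec_apply, dotProduct, Pi.smul_apply, smul_eq_mul,
    Finset.sum_mul]
  exact Finset.sum_congr rfl fun k _ => by ring

lemma vecMulVec_psd (v : Fin p → ℝ) : (vecMulVec v v).PosSemidef := by
  refine Matrix.PosSemidef.of_dotProduct_mulVec_nonneg ?_ ?_
  · ext i j
    simp [vecMulVec_apply, Matrix.conjTranspose_apply, mul_comm]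
  · intro x
    rw [vecMulVec_mulVec]
    have : star x ⬝ᵥ ((v ⬝ᵥ x) • v) = (v ⬝ᵥ x) * (x ⬝ᵥ v) := by
      simp [dotProduct, Finset.mul_sum]
      exact Finset.sum_congr rfl fun i _ => by ring
    rw [this, dotProduct_comm]
    exact mul_self_nonneg _

lemma det_pert (Ω : Matrix (Fin p) (Fin p) ℝ) (hdet : IsUnit Ω.det) (v : Fin p → ℝ)
    (θ t : ℝ) (hθ : θ ≠ 0) (hv : Ω *ᵥ v = θ • v) (hv2 : ∑ j, (v j)^2 = 1) :
    (Ω + t • vecMulVec v v).det = Ω.det * (1 + t/θ) := by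
  have hinv : Ω⁻¹ *ᵥ v = θ⁻¹ • v := by
    have h1 : Ω⁻¹ *ᵥ (Ω *ᵥ v) = v := by
      rw [Matrix.mulVec_mulVec, Matrix.nonsing_inv_mul _ hdet, Matrix.one_mulVec]
    rw [hv, Matrix.mulVec_smul] at h1
    have := congrArg (fun w => θ⁻¹ • w) h1
    simpa [smul_smul, inv_mul_cancel₀ hθ] using this
  have hE : t • vecMulVec v v = replicateCol Unit (t • v) * replicateRow Unit v := by
    rw [← vecMulVec_eq Unit]
    ext i j
    simp [vecMulVec_apply]
    ring
  rw [hE, Matrix.det_add_replicateCol_mul_replicateRow hdet]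
  congr 1
  rw [Matrix.det_unique]
  have : Matrix.replicateRow Unit v * Ω⁻¹ * Matrix.replicateCol Unit (t • v)
      = Matrix.replicateRow Unit v * Matrix.replicateCol Unit (Ω⁻¹ *ᵥ (t • v)) := by
    rw [Matrix.replicateCol_mulVec, Matrix.mul_assoc]
  rw [Matrix.add_apply, Matrix.one_apply_eq, this, Matrix.replicateRow_mul_replicateCol_apply]
  rw [Matrix.mulVec_smul, hinv]
  have : v ⬝ᵥ (t • θ⁻¹ • v) = t * θ⁻¹ * ∑ j, (v j)^2 := by
    simp [dotProduct, Finset.mul_sum, pow_two]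
    exact Finset.sum_congr rfl fun i _ => by ring
  rw [this, hv2]
  field_simp

lemma frob_pert (Ω : Matrix (Fin p) (Fin p) ℝ) (v : Fin p → ℝ) (θ t : ℝ)
    (hv : Ω *ᵥ v = θ • v) (hv2 : ∑ j, (v j)^2 = 1) :
    (frobNorm (Ω + t • vecMulVec v v))^2 = (frobNorm Ω)^2 + 2*t*θ + t^2 := by
  rw [frob_sq, frob_sq]
  have key : ∀ i j, ((Ω + t • vecMulVec v v) i j)^2
      = (Ω i j)^2 + 2*t*(Ω i j * (v i * v j)) + t^2*((v i)^2*(v j)^2) := by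
    intro i j
    have h : (Ω + t • vecMulVec v v) i j = Ω i j + t*(v i * v j) := by
      simp [vecMulVec_apply]
    rw [h]; ring
  have hA : ∑ i, ∑ j, Ω i j * (v i * v j) = θ := by
    have h1 : ∀ i, ∑ j, Ω i j * (v i * v j) = v i * (θ * v i) := by
      intro i
      have h2 : ∑ j, Ω i j * v j = θ * v i := by
        have := congrFun hv i
        simpa [Matrix.mulVec, dotProduct] using this
      calc ∑ j, Ω i j * (v i * v j) = v i * ∑ j, Ω i j * v j := by
            rw [Finset.mul_sum]; exact Finset.sum_congr rfl fun j _ => by ring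
        _ = v i * (θ * v i) := by rw [h2]
    calc ∑ i, ∑ j, Ω i j * (v i * v j) = ∑ i, v i * (θ * v i) :=
          Finset.sum_congr rfl fun i _ => h1 i
      _ = θ * ∑ i, (v i)^2 := by
          rw [Finset.mul_sum]; exact Finset.sum_congr rfl fun i _ => by ring
      _ = θ := by rw [hv2, mul_one]
  have hB : ∑ i, ∑ j, (v i)^2*(v j)^2 = 1 := by
    have : ∑ i, ∑ j, (v i)^2*(v j)^2 = (∑ i, (v i)^2) * (∑ j, (v j)^2) := by
      rw [Finset.sum_mul_sum]
    rw [this, hv2, one_mul]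
  calc ∑ i, ∑ j, ((Ω + t • vecMulVec v v) i j)^2
      = ∑ i, ∑ j, ((Ω i j)^2 + 2*t*(Ω i j * (v i * v j)) + t^2*((v i)^2*(v j)^2)) :=
        Finset.sum_congr rfl fun i _ => Finset.sum_congr rfl fun j _ => key i j
    _ = (∑ i, ∑ j, (Ω i j)^2) + 2*t*(∑ i, ∑ j, Ω i j * (v i * v j))
        + t^2*(∑ i, ∑ j, (v i)^2*(v j)^2) := by
        simp only [Finset.sum_add_distrib, Finset.mul_sum]
    _ = (∑ i, ∑ j, (Ω i j)^2) + 2*t*θ + t^2 := by rw [hA, hB, mul_one]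

lemma sum_sq_pos {x : Fin p → ℝ} (hx : x ≠ 0) : 0 < ∑ j, (x j)^2 := by
  rcases Function.ne_iff.mp hx with ⟨j, hj⟩
  exact Finset.sum_pos' (fun i _ => sq_nonneg _)
    ⟨j, Finset.mem_univ j, by simpa [sq_abs] using pow_pos (abs_pos.mpr hj) 2⟩

lemma vecMulVec_transpose (v : Fin p → ℝ) : (vecMulVec v v)ᵀ = vecMulVec v v := by
  ext i j
  simp [vecMulVec_apply, mul_comm]

lemma posdef_pert_pos {Ω : Matrix (Fin p) (Fin p) ℝ} (hΩ : Ω.PosDef) (v : Fin p → ℝ)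
    (t : ℝ) (ht : 0 ≤ t) : (Ω + t • vecMulVec v v).PosDef := by
  refine hΩ.add_posSemidef (Matrix.PosSemidef.of_dotProduct_mulVec_nonneg ?_ fun x => ?_)
  · simp [Matrix.IsHermitian, Matrix.conjTranspose_smul, vecMulVec_transpose]
  · rw [Matrix.smul_mulVec, dotProduct_smul]
    exact mul_nonneg ht (by simpa using (vecMulVec_psd v).dotProduct_mulVec_nonneg x)

lemma posdef_pert_neg {Ω : Matrix (Fin p) (Fin p) ℝ} (hΩ : Ω.PosDef) (v : Fin p → ℝ)
    (hv2 : ∑ j, (v j)^2 = 1) (μ : ℝ)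
    (hμq : ∀ x : Fin p → ℝ, μ * ∑ j, (x j)^2 ≤ x ⬝ᵥ (Ω *ᵥ x))
    (s : ℝ) (hs : 0 < s) (hsμ : s < μ) : (Ω + (-s) • vecMulVec v v).PosDef := by
  refine Matrix.PosDef.of_dotProduct_mulVec_pos ?_ ?_
  · exact hΩ.1.add (by simp [Matrix.IsHermitian, Matrix.conjTranspose_smul, vecMulVec_transpose])
  · intro x hx
    have hx2 : 0 < ∑ j, (x j)^2 := sum_sq_pos hx
    have hcs : (v ⬝ᵥ x)^2 ≤ (∑ j, (v j)^2) * (∑ j, (x j)^2) := by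
      have := Finset.sum_mul_sq_le_sq_mul_sq Finset.univ v x
      simpa [dotProduct] using this
    rw [hv2, one_mul] at hcs
    have hq : x ⬝ᵥ ((Ω + (-s) • vecMulVec v v) *ᵥ x)
        = x ⬝ᵥ (Ω *ᵥ x) - s * (v ⬝ᵥ x)^2 := by
      rw [Matrix.add_mulVec, dotProduct_add, Matrix.smul_mulVec, dotProduct_smul,
        vecMulVec_mulVec, dotProduct_smul]
      have : x ⬝ᵥ v = v ⬝ᵥ x := dotProduct_comm _ _
      simp only [smul_eq_mul, this]
      ring
    have : 0 < x ⬝ᵥ ((Ω + (-s) • vecMulVec v v) *ᵥ x) := by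
      rw [hq]
      have h1 := hμq x
      nlinarith
    simpa using this

end Aux

set_option maxHeartbeats 1600000

/-- bounds on the elastic-net penalized precision matrix estimator. -/
theorem stmt0 {p : ℕ} (hp : 0 < p)
    (S : Matrix (Fin p) (Fin p) ℝ) (hS : S.IsHermitian)
    (γ1 γ2 : ℝ) (hγ1 : 0 < γ1) (hγ2 : 0 < γ2)
    (Ωstar : Matrix (Fin p) (Fin p) ℝ) (hΩstar : Ωstar.PosDef)
    (hmin : ∀ M : Matrix (Fin p) (Fin p) ℝ, M.PosDef →
      genObj S γ1 γ2 Ωstar ≤ genObj S γ1 γ2 M)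
    (α β : ℝ)
    (hα : α⁻¹ = (maxEig S + γ1 * p + Real.sqrt ((maxEig S + γ1 * p)^2 + 8*γ2)) / 2)
    (hβ : β⁻¹ = (minEig S - γ1 * p + Real.sqrt ((minEig S - γ1 * p)^2 + 8*γ2)) / 2) :
    loewnerLE (α • (1 : Matrix (Fin p) (Fin p) ℝ)) Ωstar ∧
      loewnerLE Ωstar (β • (1 : Matrix (Fin p) (Fin p) ℝ)) := by
  classical
  have hΩ : Ωstar.IsHermitian := hΩstar.1
  haveI : Nonempty (Fin p) := ⟨⟨0, hp⟩⟩
  have hSmax : ∀ x : Fin p → ℝ, x ⬝ᵥ (S *ᵥ x) ≤ maxEig S * ∑ j, (x j)^2 := by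
    intro x
    refine quad_le S hS _ (fun i => ?_) x
    rw [maxEig, dif_pos hS]
    exact le_ciSup (Set.Finite.bddAbove (Set.finite_range _)) i
  have hSmin : ∀ x : Fin p → ℝ, minEig S * ∑ j, (x j)^2 ≤ x ⬝ᵥ (S *ᵥ x) := by
    intro x
    refine le_quad S hS _ (fun i => ?_) x
    rw [minEig, dif_pos hS]
    exact ciInf_le (Set.Finite.bddBelow (Set.finite_range _)) i
  obtain ⟨i₀, hi₀⟩ := Finite.exists_min hΩ.eigenvalues
  set μ := hΩ.eigenvalues i₀ with hμdef
  have hμpos : 0 < μ := hΩstar.eigenvalues_pos i₀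
  have hμq : ∀ x : Fin p → ℝ, μ * ∑ j, (x j)^2 ≤ x ⬝ᵥ (Ωstar *ᵥ x) := le_quad _ hΩ μ hi₀
  have hdetpos := hΩstar.det_pos
  have hdet : IsUnit Ωstar.det := isUnit_iff_ne_zero.mpr (ne_of_gt hdetpos)
  -- key per-eigenvalue bounds
  have key : ∀ i : Fin p,
      (hΩ.eigenvalues i)⁻¹ ≤ maxEig S + γ1*p + 2*γ2*(hΩ.eigenvalues i) ∧
      minEig S - γ1*p + 2*γ2*(hΩ.eigenvalues i) ≤ (hΩ.eigenvalues i)⁻¹ := by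
    intro i
    set θ := hΩ.eigenvalues i with hθdef
    set v : Fin p → ℝ := ⇑(hΩ.eigenvectorBasis i) with hvdef
    have hθpos : 0 < θ := hΩstar.eigenvalues_pos i
    have hθ' : θ ≠ 0 := ne_of_gt hθpos
    have hv : Ωstar *ᵥ v = θ • v := hΩ.mulVec_eigenvectorBasis i
    have hv2 : ∑ j, (v j)^2 = 1 := by
      have hn : ‖hΩ.eigenvectorBasis i‖ = 1 := hΩ.eigenvectorBasis.orthonormal.1 i
      rw [EuclideanSpace.norm_eq] at hn
      have := Real.sqrt_eq_one.mp hn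
      simpa [Real.norm_eq_abs, sq_abs] using this
    set E := vecMulVec v v with hEdef
    set c := v ⬝ᵥ (S *ᵥ v) with hcdef
    have hcmax : c ≤ maxEig S := by
      have := hSmax v
      rw [hv2, mul_one] at this
      exact this
    have hcmin : minEig S ≤ c := by
      have := hSmin v
      rw [hv2, mul_one] at this
      exact this
    have hl1E : l1Norm E ≤ (p:ℝ) := l1_vecMulVec_le v hv2
    -- generic difference bound
    have hdiff : ∀ t : ℝ, (Ωstar + t • E).PosDef → 0 < 1 + t/θ →
        Real.log (1 + t/θ) ≤ t*c + γ1*(|t| * p) + γ2*(2*t*θ + t^2) := by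
      intro t hPD hpos
      have h0 := hmin _ hPD
      simp only [genObj] at h0
      have htr : (S * (Ωstar + t • E)).trace = (S * Ωstar).trace + t * c := by
        rw [Matrix.mul_add, Matrix.trace_add, Matrix.mul_smul, Matrix.trace_smul,
          trace_mul_vecMulVec]
        simp [hcdef]
      have hlog : Real.log (Ωstar + t • E).det
          = Real.log Ωstar.det + Real.log (1 + t/θ) := by
        rw [det_pert _ hdet v θ t hθ' hv hv2,
          Real.log_mul (ne_of_gt hdetpos) (ne_of_gt hpos)]
      have hfrob : (frobNorm (Ωstar + t • E))^2 = (frobNorm Ωstar)^2 + 2*t*θ + t^2 :=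
        frob_pert _ v θ t hv hv2
      have hl1 : l1Norm (Ωstar + t • E) ≤ l1Norm Ωstar + |t| * l1Norm E :=
        l1_pert_le _ _ _
      have hl1' : γ1 * l1Norm (Ωstar + t • E) ≤ γ1 * l1Norm Ωstar + γ1 * (|t| * (p:ℝ)) := by
        have h1 : |t| * l1Norm E ≤ |t| * (p:ℝ) :=
          mul_le_mul_of_nonneg_left hl1E (abs_nonneg t)
        have ha := mul_le_mul_of_nonneg_left hl1 hγ1.le
        have hb := mul_le_mul_of_nonneg_left h1 hγ1.le
        nlinarith [ha, hb]
      rw [htr, hlog, hfrob] at h0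
      linarith [h0, hl1']
    -- upper bound on θ⁻¹
    have hup : θ⁻¹ ≤ c + γ1*p + 2*γ2*θ := by
      refine slope_limit (C := γ2) (show (0:ℝ) < 1 by norm_num) (fun s hs => ?_)
      have hPD : (Ωstar + s • E).PosDef := posdef_pert_pos hΩstar v s hs.1.le
      have hpos : 0 < 1 + s/θ := by
        have := div_pos hs.1 hθpos
        linarith
      have h1 := hdiff s hPD hpos
      rw [abs_of_pos hs.1] at h1
      have hst : s/θ = s * θ⁻¹ := div_eq_mul_inv s θ
      rw [hst] at h1
      calc Real.log (1 + s * θ⁻¹) ≤ s*c + γ1*(s * p) + γ2*(2*s*θ + s^2) := h1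
        _ = s*(c + γ1*p + 2*γ2*θ) + γ2*s^2 := by ring
    -- lower bound on θ⁻¹
    have hlo : -θ⁻¹ ≤ -c + γ1*p - 2*γ2*θ := by
      refine slope_limit (C := γ2) hμpos (fun s hs => ?_)
      have hPD : (Ωstar + (-s) • E).PosDef :=
        posdef_pert_neg hΩstar v hv2 μ hμq s hs.1 hs.2
      have hθμ : μ ≤ θ := hi₀ i
      have hpos : 0 < 1 + (-s)/θ := by
        rw [neg_div]
        have : s/θ < 1 := (div_lt_one hθpos).mpr (lt_of_lt_of_le hs.2 hθμ)
        linarith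
      have h1 := hdiff (-s) hPD hpos
      rw [abs_neg, abs_of_pos hs.1] at h1
      have hst : (-s)/θ = s * (-θ⁻¹) := by
        rw [neg_div, div_eq_mul_inv]
        ring
      rw [hst] at h1
      calc Real.log (1 + s * (-θ⁻¹))
          ≤ (-s)*c + γ1*(s * p) + γ2*(2*(-s)*θ + (-s)^2) := h1
        _ = s*(-c + γ1*p - 2*γ2*θ) + γ2*s^2 := by ring
    constructor
    · linarith
    · linarith
  -- algebraic conclusion
  have halg : ∀ i : Fin p, α ≤ hΩ.eigenvalues i ∧ hΩ.eigenvalues i ≤ β := by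
    intro i
    obtain ⟨h1, h2⟩ := key i
    have hθpos : 0 < hΩ.eigenvalues i := hΩstar.eigenvalues_pos i
    set θ := hΩ.eigenvalues i with hθdef
    constructor
    · set m := maxEig S + γ1*(p:ℝ) with hmdef
      have hsq : Real.sqrt (m^2+8*γ2) ^ 2 = m^2 + 8*γ2 := Real.sq_sqrt (by positivity)
      have hsn : 0 ≤ Real.sqrt (m^2+8*γ2) := Real.sqrt_nonneg _
      have hsm : -m < Real.sqrt (m^2+8*γ2) :=
        lt_of_pow_lt_pow_left₀ 2 hsn (by nlinarith [hγ2, hsq])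
      have hrpos : 0 < α⁻¹ := by rw [hα]; linarith
      have hαpos : 0 < α := inv_pos.mp hrpos
      have hαne : α ≠ 0 := ne_of_gt hαpos
      have h6 : α⁻¹ * (α⁻¹ - m) = 2*γ2 := by
        rw [hα]
        linear_combination hsq / 4
      have h8 : α⁻¹ * α = 1 := inv_mul_cancel₀ hαne
      have hroot : 2*γ2*α^2 + m*α - 1 = 0 := by
        have h7 := congrArg (fun z => z * α^2) h6
        linear_combination (-1) * h7 + (α⁻¹*α + 1 - m*α) * h8
      have hθineq : 1 ≤ m*θ + 2*γ2*θ^2 := by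
        have h9 := mul_le_mul_of_nonneg_left h1 hθpos.le
        rw [mul_inv_cancel₀ (ne_of_gt hθpos)] at h9
        nlinarith [h9]
      have heq : (θ - α) * (m + 2*γ2*(θ+α)) = (m*θ + 2*γ2*θ^2) - 1 := by
        linear_combination -hroot
      have hfac : 0 ≤ (θ - α) * (m + 2*γ2*(θ+α)) := by
        rw [heq]; linarith
      have h10 : α*(m + 2*γ2*(θ+α)) = 1 + 2*γ2*α*θ := by
        linear_combination hroot
      have h11 : 0 < α * (m + 2*γ2*(θ+α)) := by
        rw [h10]
        nlinarith [mul_pos (mul_pos hγ2 hαpos) hθpos]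
      have hpos2 : 0 < m + 2*γ2*(θ+α) := by
        by_contra hcon
        push_neg at hcon
        nlinarith [mul_nonpos_of_nonneg_of_nonpos hαpos.le hcon]
      by_contra hcon
      push_neg at hcon
      nlinarith [mul_pos (sub_pos.mpr hcon) hpos2]
    · set m := minEig S - γ1*(p:ℝ) with hmdef
      have hsq : Real.sqrt (m^2+8*γ2) ^ 2 = m^2 + 8*γ2 := Real.sq_sqrt (by positivity)
      have hsn : 0 ≤ Real.sqrt (m^2+8*γ2) := Real.sqrt_nonneg _
      have hsm : -m < Real.sqrt (m^2+8*γ2) :=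
        lt_of_pow_lt_pow_left₀ 2 hsn (by nlinarith [hγ2, hsq])
      have hrpos : 0 < β⁻¹ := by rw [hβ]; linarith
      have hβpos : 0 < β := inv_pos.mp hrpos
      have hβne : β ≠ 0 := ne_of_gt hβpos
      have h6 : β⁻¹ * (β⁻¹ - m) = 2*γ2 := by
        rw [hβ]
        linear_combination hsq / 4
      have h8 : β⁻¹ * β = 1 := inv_mul_cancel₀ hβne
      have hroot : 2*γ2*β^2 + m*β - 1 = 0 := by
        have h7 := congrArg (fun z => z * β^2) h6
        linear_combination (-1) * h7 + (β⁻¹*β + 1 - m*β) * h8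
      have hθineq : m*θ + 2*γ2*θ^2 ≤ 1 := by
        have h9 := mul_le_mul_of_nonneg_left h2 hθpos.le
        rw [mul_inv_cancel₀ (ne_of_gt hθpos)] at h9
        nlinarith [h9]
      have heq : (θ - β) * (m + 2*γ2*(θ+β)) = (m*θ + 2*γ2*θ^2) - 1 := by
        linear_combination -hroot
      have hfac : (θ - β) * (m + 2*γ2*(θ+β)) ≤ 0 := by
        rw [heq]; linarith
      have h10 : β*(m + 2*γ2*(θ+β)) = 1 + 2*γ2*β*θ := by
        linear_combination hroot
      have h11 : 0 < β * (m + 2*γ2*(θ+β)) := by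
        rw [h10]
        nlinarith [mul_pos (mul_pos hγ2 hβpos) hθpos]
      have hpos2 : 0 < m + 2*γ2*(θ+β) := by
        by_contra hcon
        push_neg at hcon
        nlinarith [mul_nonpos_of_nonneg_of_nonpos hβpos.le hcon]
      by_contra hcon
      push_neg at hcon
      nlinarith [mul_pos (sub_pos.mpr hcon) hpos2]
  constructor
  · exact sub_smul_one_psd Ωstar hΩ α (fun i => (halg i).1)
  · exact smul_one_sub_psd Ωstar hΩ β (fun i => (halg i).2)
end

section
/- Let γ1 > 0, γ2 > 0, and let 0 < a < b be constants such that the GEN-ISTA iterate Ω^{(k)} and the minimizer Ω* both satisfy aI ⪯ · ⪯ bI. If 0 < t ≤ a²/(2a²γ2 + 1), then ‖Ω^{(k+1)} − Ω*‖_F ≤ max(|m_t − t/a²|, |m_t − t/b²|)·‖Ω^{(k)} − Ω*‖_F, where m_t = 1 − 2tγ2. -/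
open Matrix BigOperators Kronecker

section Helpers

open Matrix BigOperators Polynomial Filter Topology

noncomputable def frobSq {n : Type*} [Fintype n] (A : Matrix n n ℝ) : ℝ :=
  ∑ i, ∑ j, (A i j)^2

noncomputable def sft (x τ : ℝ) : ℝ := Real.sign x * max (|x| - τ) 0

lemma sft_eq_clamp (τ : ℝ) (hτ : 0 ≤ τ) (x : ℝ) :
    sft x τ = x - max (min x τ) (-τ) := by
  unfold sft
  rcases lt_trichotomy x 0 with h | h | h
  · rw [Real.sign_of_neg h, abs_of_neg h]
    rcases le_total (-x - τ) 0 with h2 | h2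
    · rw [max_eq_right h2, min_eq_left (by linarith), max_eq_left (by linarith)]
      ring
    · rw [max_eq_left h2, min_eq_left (by linarith), max_eq_right (by linarith)]
      ring
  · rw [h, Real.sign_zero, abs_zero, min_eq_left hτ, max_eq_left (neg_nonpos.2 hτ)]
    ring
  · rw [Real.sign_of_pos h, abs_of_pos h]
    rcases le_total (x - τ) 0 with h2 | h2
    · rw [max_eq_right h2, min_eq_left (by linarith), max_eq_left (by linarith)]
      ring
    · rw [max_eq_left h2, min_eq_right (by linarith), max_eq_left (by linarith)]
      ring

private lemma clamp_mono_lip {τ x y : ℝ} (h : x ≤ y) :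
    max (min x τ) (-τ) ≤ max (min y τ) (-τ) ∧
      max (min y τ) (-τ) ≤ max (min x τ) (-τ) + (y - x) := by
  constructor
  · exact max_le_max (min_le_min h le_rfl) le_rfl
  · apply max_le
    · rcases le_total x τ with h1 | h1
      · calc min y τ ≤ y := min_le_left _ _
          _ = x + (y - x) := by ring
          _ ≤ min x τ + (y - x) := by rw [min_eq_left h1]
          _ ≤ max (min x τ) (-τ) + (y - x) := by gcongr; exact le_max_left _ _
      · calc min y τ ≤ τ := min_le_right _ _
          _ = min x τ := (min_eq_right h1).symm
          _ ≤ max (min x τ) (-τ) := le_max_left _ _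
          _ ≤ _ := by linarith
    · have : -τ ≤ max (min x τ) (-τ) := le_max_right _ _
      linarith

lemma sft_lipschitz (τ : ℝ) (hτ : 0 ≤ τ) (x y : ℝ) :
    |sft x τ - sft y τ| ≤ |x - y| := by
  rw [sft_eq_clamp τ hτ, sft_eq_clamp τ hτ]
  rcases le_total x y with h | h
  · obtain ⟨h1, h2⟩ := clamp_mono_lip (τ := τ) h
    rw [abs_sub_comm x y, show |y - x| = y - x from abs_of_nonneg (by linarith), abs_le]
    constructor <;> linarith
  · obtain ⟨h1, h2⟩ := clamp_mono_lip (τ := τ) h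
    rw [show |x - y| = x - y from abs_of_nonneg (by linarith), abs_le]
    constructor <;> linarith

/-- fixed-point property of scalar soft thresholding at a subdifferential point -/
lemma sft_fixed {x g γ1 t : ℝ} (hγ1 : 0 < γ1) (ht : 0 < t)
    (h1 : 0 < x → g = -γ1) (h2 : x < 0 → g = γ1) (h3 : x = 0 → |g| ≤ γ1) :
    sft (x - t * g) (t * γ1) = x := by
  rcases lt_trichotomy x 0 with h | h | h
  · rw [h2 h]
    unfold sft
    have hneg : x - t * γ1 < 0 := by nlinarith
    rw [Real.sign_of_neg hneg, abs_of_neg hneg, max_eq_left (by nlinarith)]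
    ring
  · subst h
    have := h3 rfl
    unfold sft
    have habs : |0 - t * g| ≤ t * γ1 := by
      rw [zero_sub, abs_neg, abs_mul, abs_of_pos ht]
      exact mul_le_mul_of_nonneg_left this ht.le
    rw [max_eq_right (by linarith)]
    ring
  · rw [h1 h]
    unfold sft
    have hpos : 0 < x - t * (-γ1) := by nlinarith
    rw [Real.sign_of_pos hpos, abs_of_pos hpos, max_eq_left (by nlinarith)]
    ring



lemma frobSq_nonneg {n : Type*} [Fintype n] (A : Matrix n n ℝ) : 0 ≤ frobSq A :=
  Finset.sum_nonneg fun _ _ => Finset.sum_nonneg fun _ _ => sq_nonneg _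

lemma frobNorm_eq {n : Type*} [Fintype n] (A : Matrix n n ℝ) :
    frobNorm A = Real.sqrt (frobSq A) := rfl

lemma frobNorm_mono {n : Type*} [Fintype n] (A B : Matrix n n ℝ)
    (h : ∀ i j, |A i j| ≤ |B i j|) : frobNorm A ≤ frobNorm B := by
  apply Real.sqrt_le_sqrt
  apply Finset.sum_le_sum
  intro i _
  apply Finset.sum_le_sum
  intro j _
  rw [← sq_abs (A i j), ← sq_abs (B i j)]
  exact pow_le_pow_left₀ (abs_nonneg _) (h i j) 2

lemma frobSq_eq_trace {n : Type*} [Fintype n] (A : Matrix n n ℝ) :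
    frobSq A = (Aᵀ * A).trace := by
  rw [Matrix.trace, frobSq, Finset.sum_comm]
  apply Finset.sum_congr rfl
  intro j _
  rw [Matrix.diag_apply, Matrix.mul_apply]
  apply Finset.sum_congr rfl
  intro i _
  rw [Matrix.transpose_apply, sq]

lemma frobSq_unit_left {n : Type*} [Fintype n] [DecidableEq n] (U M : Matrix n n ℝ)
    (hU : Uᵀ * U = 1) : frobSq (U * M) = frobSq M := by
  rw [frobSq_eq_trace, frobSq_eq_trace, Matrix.transpose_mul, Matrix.mul_assoc,
    ← Matrix.mul_assoc Uᵀ U M, hU, Matrix.one_mul]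

lemma frobSq_unit_right {n : Type*} [Fintype n] [DecidableEq n] (V M : Matrix n n ℝ)
    (hV : V * Vᵀ = 1) : frobSq (M * V) = frobSq M := by
  rw [frobSq_eq_trace, frobSq_eq_trace, Matrix.transpose_mul, Matrix.mul_assoc,
    Matrix.trace_mul_comm, Matrix.mul_assoc, Matrix.mul_assoc, hV, Matrix.mul_one,
    Matrix.trace_mul_comm]

lemma abs_affine_le {c d l m α β : ℝ} (hd : 0 ≤ d) (hα : 0 < α)
    (hl : α ≤ l) (hl' : l ≤ β) (hm : α ≤ m) (hm' : m ≤ β) :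
    |c - d * (l * m)| ≤ max |c - d * α^2| |c - d * β^2| := by
  have h1 : α^2 ≤ l * m := by nlinarith
  have h2 : l * m ≤ β^2 := by nlinarith
  rw [abs_le]
  constructor
  · calc -(max |c - d * α^2| |c - d * β^2|) ≤ -|c - d * β^2| := by
          simp only [neg_le_neg_iff]; exact le_max_right _ _
      _ ≤ c - d * β^2 := neg_abs_le _
      _ ≤ c - d * (l * m) := by nlinarith
  · calc c - d * (l * m) ≤ c - d * α^2 := by nlinarith
      _ ≤ |c - d * α^2| := le_abs_self _
      _ ≤ _ := le_max_left _ _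

/-- Key contraction bound. -/
lemma keyContract {n : Type*} [Fintype n] [DecidableEq n]
    (c d α β : ℝ) (hd : 0 ≤ d) (hα : 0 < α)
    (U V : Matrix n n ℝ) (hU1 : Uᵀ * U = 1) (hU2 : U * Uᵀ = 1)
    (hV1 : Vᵀ * V = 1) (hV2 : V * Vᵀ = 1)
    (lam mu : n → ℝ)
    (hlam : ∀ i, α ≤ lam i ∧ lam i ≤ β) (hmu : ∀ i, α ≤ mu i ∧ mu i ≤ β)
    (Δ : Matrix n n ℝ) :
    frobNorm (c • Δ - d • ((U * diagonal lam * Uᵀ) * Δ * (V * diagonal mu * Vᵀ))) ≤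
      max |c - d * α^2| |c - d * β^2| * frobNorm Δ := by
  set K := max |c - d * α^2| |c - d * β^2| with hK
  have hK0 : 0 ≤ K := le_trans (abs_nonneg _) (le_max_left _ _)
  set Δ' := Uᵀ * Δ * V with hΔ'
  have hΔeq : Δ = U * Δ' * Vᵀ := by
    rw [hΔ', Matrix.mul_assoc, Matrix.mul_assoc, hV2, Matrix.mul_one, ← Matrix.mul_assoc, hU2,
      Matrix.one_mul]
  have cancelU : ∀ M : Matrix n n ℝ, Uᵀ * (U * M) = M := fun M => by
    rw [← Matrix.mul_assoc, hU1, Matrix.one_mul]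
  have cancelV : ∀ M : Matrix n n ℝ, Vᵀ * (V * M) = M := fun M => by
    rw [← Matrix.mul_assoc, hV1, Matrix.one_mul]
  have hm : (U * diagonal lam * Uᵀ) * Δ * (V * diagonal mu * Vᵀ) =
      U * (diagonal lam * Δ' * diagonal mu) * Vᵀ := by
    conv_lhs => rw [hΔeq]
    simp only [Matrix.mul_assoc]
    rw [cancelU, cancelV]
  have key : c • Δ - d • ((U * diagonal lam * Uᵀ) * Δ * (V * diagonal mu * Vᵀ)) =
      U * (c • Δ' - d • (diagonal lam * Δ' * diagonal mu)) * Vᵀ := by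
    rw [hm, Matrix.mul_sub, Matrix.sub_mul, Matrix.mul_smul, Matrix.smul_mul,
      Matrix.mul_smul, Matrix.smul_mul, ← hΔeq]
  rw [key, frobNorm_eq, frobNorm_eq]
  have h1 : frobSq (U * (c • Δ' - d • (diagonal lam * Δ' * diagonal mu)) * Vᵀ) =
      frobSq (c • Δ' - d • (diagonal lam * Δ' * diagonal mu)) := by
    rw [frobSq_unit_right Vᵀ _ (by rw [Matrix.transpose_transpose]; exact hV1),
      frobSq_unit_left _ _ hU1]
  rw [h1]
  have h2 : frobSq Δ = frobSq Δ' := by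
    rw [hΔ', frobSq_unit_right V _ hV2,
      frobSq_unit_left Uᵀ _ (by rw [Matrix.transpose_transpose]; exact hU2)]
  rw [h2]
  have h3 : frobSq (c • Δ' - d • (diagonal lam * Δ' * diagonal mu)) ≤ K^2 * frobSq Δ' := by
    rw [frobSq, frobSq, Finset.mul_sum]
    apply Finset.sum_le_sum
    intro i _
    rw [Finset.mul_sum]
    apply Finset.sum_le_sum
    intro j _
    have hentry : (c • Δ' - d • (diagonal lam * Δ' * diagonal mu)) i j =
        (c - d * (lam i * mu j)) * Δ' i j := by
      simp [Matrix.sub_apply, Matrix.smul_apply, Matrix.mul_diagonal, Matrix.diagonal_mul,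
        smul_eq_mul]
      ring
    rw [hentry, mul_pow]
    have habs := abs_affine_le (c := c) hd hα (hlam i).1 (hlam i).2 (hmu j).1 (hmu j).2
    have hsq : (c - d * (lam i * mu j))^2 ≤ K^2 := by
      rw [← sq_abs (c - d * (lam i * mu j))]
      exact pow_le_pow_left₀ (abs_nonneg _) habs 2
    exact mul_le_mul_of_nonneg_right hsq (sq_nonneg _)
  calc Real.sqrt (frobSq (c • Δ' - d • (diagonal lam * Δ' * diagonal mu))) ≤
        Real.sqrt (K^2 * frobSq Δ') := Real.sqrt_le_sqrt h3
    _ = K * Real.sqrt (frobSq Δ') := by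
        rw [Real.sqrt_mul (sq_nonneg _), Real.sqrt_sq hK0]

open Matrix BigOperators

lemma star_eq_transpose_real {n : Type*} [Fintype n] (M : Matrix n n ℝ) : star M = Mᵀ := by
  ext i j
  simp [Matrix.star_apply]

/-- eigenvalue lower/upper bounds from Loewner bounds -/
lemma eig_bounds {p : ℕ} (A : Matrix (Fin p) (Fin p) ℝ) (hH : A.IsHermitian) (a b : ℝ)
    (h1 : (A - a • (1 : Matrix (Fin p) (Fin p) ℝ)).PosSemidef)
    (h2 : (b • (1 : Matrix (Fin p) (Fin p) ℝ) - A).PosSemidef) (i : Fin p) :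
    a ≤ hH.eigenvalues i ∧ hH.eigenvalues i ≤ b := by
  set v : Fin p → ℝ := ⇑(hH.eigenvectorBasis i) with hv
  have hmv : A *ᵥ v = hH.eigenvalues i • v := hH.mulVec_eigenvectorBasis i
  have hvne : v ≠ 0 := by
    have := hH.eigenvectorBasis.orthonormal.ne_zero i
    intro hcontra
    apply this
    ext k
    exact congrFun hcontra k
  have hvv : 0 < dotProduct v v := by
    rcases Function.ne_iff.mp hvne with ⟨k, hk⟩
    apply Finset.sum_pos' (fun l _ => mul_self_nonneg _)
    exact ⟨k, Finset.mem_univ k, mul_self_pos.mpr hk⟩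
  constructor
  · have := h1.dotProduct_mulVec_nonneg v
    rw [star_trivial, Matrix.sub_mulVec, hmv, Matrix.smul_mulVec, Matrix.one_mulVec,
      dotProduct_sub, dotProduct_smul, dotProduct_smul] at this
    simp only [smul_eq_mul] at this
    nlinarith
  · have := h2.dotProduct_mulVec_nonneg v
    rw [star_trivial, Matrix.sub_mulVec, hmv, Matrix.smul_mulVec, Matrix.one_mulVec,
      dotProduct_sub, dotProduct_smul, dotProduct_smul] at this
    simp only [smul_eq_mul] at this
    nlinarith

/-- Spectral decomposition of the inverse of a positive definite matrix with Loewner bounds. -/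
lemma inv_decomp {p : ℕ} (A : Matrix (Fin p) (Fin p) ℝ) (hA : A.PosDef) (a b : ℝ)
    (ha : 0 < a) (hab : a < b)
    (h1 : (A - a • (1 : Matrix (Fin p) (Fin p) ℝ)).PosSemidef)
    (h2 : (b • (1 : Matrix (Fin p) (Fin p) ℝ) - A).PosSemidef) :
    ∃ (U : Matrix (Fin p) (Fin p) ℝ) (lam : Fin p → ℝ),
      Uᵀ * U = 1 ∧ U * Uᵀ = 1 ∧ (∀ i, 1/b ≤ lam i ∧ lam i ≤ 1/a) ∧
        A⁻¹ = U * Matrix.diagonal lam * Uᵀ := by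
  have hH := hA.1
  set U : Matrix (Fin p) (Fin p) ℝ := (hH.eigenvectorUnitary : Matrix (Fin p) (Fin p) ℝ) with hU
  have hstar : star U = Uᵀ := star_eq_transpose_real U
  have hU1 : Uᵀ * U = 1 := by
    rw [← hstar]; exact Matrix.mem_unitaryGroup_iff'.mp hH.eigenvectorUnitary.2
  have hU2 : U * Uᵀ = 1 := by
    rw [← hstar]; exact Matrix.mem_unitaryGroup_iff.mp hH.eigenvectorUnitary.2
  have hbounds : ∀ i, a ≤ hH.eigenvalues i ∧ hH.eigenvalues i ≤ b :=
    eig_bounds A hH a b h1 h2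
  refine ⟨U, fun i => (hH.eigenvalues i)⁻¹, hU1, hU2, ?_, ?_⟩
  · intro i
    obtain ⟨hl, hr⟩ := hbounds i
    constructor
    · rw [one_div]
      exact inv_anti₀ (by linarith) hr
    · rw [one_div]
      exact inv_anti₀ ha hl
  · have hspec : A = U * Matrix.diagonal (hH.eigenvalues) * Uᵀ := by
      have h := hH.spectral_theorem
      have hoe : (RCLike.ofReal ∘ hH.eigenvalues : Fin p → ℝ) = hH.eigenvalues := by
        funext i; simp
      simp only [Unitary.conjStarAlgAut_apply, Unitary.coe_star] at h
      rw [← hU, hstar, hoe] at h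
      exact h
    have hdd : Matrix.diagonal (fun i => (hH.eigenvalues i)⁻¹) *
        Matrix.diagonal hH.eigenvalues = 1 := by
      rw [Matrix.diagonal_mul_diagonal]
      have : (fun i => (hH.eigenvalues i)⁻¹ * hH.eigenvalues i) = fun _ => (1:ℝ) := by
        funext i; exact inv_mul_cancel₀ (by have := (hbounds i).1; linarith)
      rw [this, Matrix.diagonal_one]
    have cancelU : ∀ M : Matrix (Fin p) (Fin p) ℝ, Uᵀ * (U * M) = M := fun M => by
      rw [← Matrix.mul_assoc, hU1, Matrix.one_mul]
    apply Matrix.inv_eq_left_inv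
    have key : U * Matrix.diagonal (fun i => (hH.eigenvalues i)⁻¹) * Uᵀ *
        (U * Matrix.diagonal hH.eigenvalues * Uᵀ) = 1 := by
      simp only [Matrix.mul_assoc]
      rw [cancelU, ← Matrix.mul_assoc (Matrix.diagonal _) (Matrix.diagonal _) Uᵀ, hdd,
        Matrix.one_mul, hU2]
    rw [← hspec] at key
    exact key


lemma hasDerivAt_smoothpart {p : ℕ} (S Ω D : Matrix (Fin p) (Fin p) ℝ)
    (hdet : Ω.det ≠ 0) (γ2 : ℝ) :
    HasDerivAt (fun ε : ℝ => (S * (Ω + ε • D)).trace - Real.log (Ω + ε • D).det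
        + γ2 * frobSq (Ω + ε • D))
      ((S * D).trace - (Ω⁻¹ * D).trace + γ2 * (2 * ∑ k, ∑ l, Ω k l * D k l)) 0 := by
  have hunit : IsUnit Ω.det := isUnit_iff_ne_zero.mpr hdet
  -- trace part
  have h1 : HasDerivAt (fun ε : ℝ => (S * (Ω + ε • D)).trace) (S * D).trace 0 := by
    have heq : (fun ε : ℝ => (S * (Ω + ε • D)).trace)
        = fun ε : ℝ => (S * Ω).trace + (S * D).trace * ε := by
      funext ε
      rw [Matrix.mul_add, Matrix.trace_add, Matrix.mul_smul, Matrix.trace_smul, smul_eq_mul,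
        mul_comm]
    rw [heq]
    simpa using ((hasDerivAt_id (0:ℝ)).const_mul (S * D).trace).const_add (S * Ω).trace
  -- frobSq part
  have h2 : HasDerivAt (fun ε : ℝ => frobSq (Ω + ε • D))
      (2 * ∑ k, ∑ l, Ω k l * D k l) 0 := by
    have heq : (fun ε : ℝ => frobSq (Ω + ε • D))
        = fun ε : ℝ => frobSq Ω + (2 * ∑ k, ∑ l, Ω k l * D k l) * ε + frobSq D * ε^2 := by
      funext ε
      simp only [frobSq, Matrix.add_apply, Matrix.smul_apply, smul_eq_mul]
      have step1 : ∑ k : Fin p, ∑ l : Fin p, (Ω k l + ε * D k l)^2 =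
          ∑ k : Fin p, ∑ l : Fin p,
            ((Ω k l)^2 + (2 * (Ω k l * D k l)) * ε + (D k l)^2 * ε^2) := by
        apply Finset.sum_congr rfl
        intro k _
        apply Finset.sum_congr rfl
        intro l _
        ring
      rw [step1]
      simp only [Finset.sum_add_distrib, ← Finset.sum_mul]
      have h2s : ∑ k : Fin p, ∑ l : Fin p, 2 * (Ω k l * D k l) =
          2 * ∑ k : Fin p, ∑ l : Fin p, Ω k l * D k l := by
        rw [Finset.mul_sum]
        exact Finset.sum_congr rfl fun k _ => (Finset.mul_sum _ _ _).symm
      rw [h2s]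
    rw [heq]
    have := (((hasDerivAt_id (0:ℝ)).const_mul (2 * ∑ k, ∑ l, Ω k l * D k l)).const_add
      (frobSq Ω)).add ((hasDerivAt_pow 2 (0:ℝ)).const_mul (frobSq D))
    simpa [Pi.add_def] using this
  -- log det part
  have h3 : HasDerivAt (fun ε : ℝ => Real.log (Ω + ε • D).det) (Ω⁻¹ * D).trace 0 := by
    set P : Polynomial ℝ := (Matrix.det (1 + (X : ℝ[X]) • (Ω⁻¹ * D).map C)).divX.divX with hP
    set q : ℝ → ℝ := fun ε => 1 + (Ω⁻¹ * D).trace * ε + P.eval ε * ε^2 with hq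
    have hdet_eq : ∀ ε : ℝ, (Ω + ε • D).det = Ω.det * q ε := by
      intro ε
      have hfact : Ω + ε • D = Ω * (1 + ε • (Ω⁻¹ * D)) := by
        rw [Matrix.mul_add, Matrix.mul_one, Matrix.mul_smul, ← Matrix.mul_assoc,
          Matrix.mul_nonsing_inv Ω hunit, Matrix.one_mul]
      rw [hfact, Matrix.det_mul, Matrix.det_one_add_smul]
    have hq0 : q 0 = 1 := by simp [hq]
    have hqd : HasDerivAt q (Ω⁻¹ * D).trace 0 := by
      have := (((hasDerivAt_id (0:ℝ)).const_mul (Ω⁻¹ * D).trace).const_add 1).add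
        ((P.hasDerivAt (0:ℝ)).mul (hasDerivAt_pow 2 (0:ℝ)))
      simpa [Pi.add_def, Pi.mul_def] using this
    have hg : HasDerivAt (fun ε : ℝ => Ω.det * q ε) (Ω.det * (Ω⁻¹ * D).trace) 0 :=
      hqd.const_mul _
    have hne : Ω.det * q 0 ≠ 0 := by rw [hq0, mul_one]; exact hdet
    have := hg.log hne
    have heq : (fun ε : ℝ => Real.log (Ω + ε • D).det)
        = fun ε : ℝ => Real.log (Ω.det * q ε) := by
      funext ε; rw [hdet_eq]
    rw [heq]
    convert this using 1
    rw [hq0, mul_one]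
    field_simp
  exact (h1.sub h3).add (h2.const_mul γ2)

open Filter Topology

lemma scalar1D {f : ℝ → ℝ} {c g γ1 x δ : ℝ} (hc : 0 < c) (hγ1 : 0 < γ1) (hδ : 0 < δ)
    (hf : HasDerivAt f (c * g) 0)
    (hineq : ∀ ε : ℝ, |ε| < δ → f 0 + c * γ1 * |x| ≤ f ε + c * γ1 * |x + ε|) :
    (0 < x → g = -γ1) ∧ (x < 0 → g = γ1) ∧ (x = 0 → |g| ≤ γ1) := by
  refine ⟨?_, ?_, ?_⟩
  · intro hx
    have hd : HasDerivAt (fun ε : ℝ => f ε + c * γ1 * (x + ε)) (c * g + c * γ1) 0 := by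
      have h2 : HasDerivAt (fun ε : ℝ => c * γ1 * (x + ε)) (c * γ1) 0 := by
        simpa using (((hasDerivAt_id (0:ℝ)).const_add x).const_mul (c * γ1))
      exact hf.add h2
    have hloc : IsLocalMin (fun ε : ℝ => f ε + c * γ1 * (x + ε)) 0 := by
      have hmem : Set.Ioo (-(min δ x)) (min δ x) ∈ 𝓝 (0:ℝ) :=
        Ioo_mem_nhds (by simp [hδ, hx]) (by simp [hδ, hx])
      filter_upwards [hmem] with ε hε
      have hmd : min δ x ≤ δ := min_le_left _ _
      have hmx : min δ x ≤ x := min_le_right _ _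
      have h1 : |ε| < δ := by rw [abs_lt]; constructor <;> [linarith [hε.1]; linarith [hε.2]]
      have h2 : 0 < x + ε := by linarith [hε.1]
      have := hineq ε h1
      rw [abs_of_pos hx, abs_of_pos h2] at this
      simpa using this
    have := hloc.hasDerivAt_eq_zero hd
    have hc' : c ≠ 0 := ne_of_gt hc
    field_simp at this
    nlinarith
  · intro hx
    have hd : HasDerivAt (fun ε : ℝ => f ε + c * γ1 * (-(x + ε))) (c * g - c * γ1) 0 := by
      have h2 : HasDerivAt (fun ε : ℝ => c * γ1 * (-(x + ε))) (-(c * γ1)) 0 := by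
        simpa using ((((hasDerivAt_id (0:ℝ)).const_add x).neg).const_mul (c * γ1))
      simpa [sub_eq_add_neg, Pi.add_def] using hf.add h2
    have hloc : IsLocalMin (fun ε : ℝ => f ε + c * γ1 * (-(x + ε))) 0 := by
      have hposm : 0 < min δ (-x) := lt_min hδ (by linarith)
      have hmem : Set.Ioo (-(min δ (-x))) (min δ (-x)) ∈ 𝓝 (0:ℝ) :=
        Ioo_mem_nhds (by linarith) hposm
      filter_upwards [hmem] with ε hε
      have hmd : min δ (-x) ≤ δ := min_le_left _ _
      have hmx : min δ (-x) ≤ -x := min_le_right _ _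
      have h1 : |ε| < δ := by rw [abs_lt]; constructor <;> [linarith [hε.1]; linarith [hε.2]]
      have h2 : x + ε < 0 := by linarith [hε.2]
      have := hineq ε h1
      rw [abs_of_neg hx, abs_of_neg h2] at this
      simpa using this
    have := hloc.hasDerivAt_eq_zero hd
    have hc' : c ≠ 0 := ne_of_gt hc
    nlinarith
  · intro hx
    subst hx
    have hslope : Tendsto (slope f 0) (𝓝[≠] (0:ℝ)) (𝓝 (c * g)) :=
      hasDerivAt_iff_tendsto_slope.mp hf
    have hright : Tendsto (slope f 0) (𝓝[>] (0:ℝ)) (𝓝 (c * g)) :=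
      hslope.mono_left (nhdsWithin_mono 0 (fun y hy => ne_of_gt hy))
    have hleft : Tendsto (slope f 0) (𝓝[<] (0:ℝ)) (𝓝 (c * g)) :=
      hslope.mono_left (nhdsWithin_mono 0 (fun y hy => ne_of_lt hy))
    have hub : c * g ≤ c * γ1 := by
      apply le_of_tendsto hleft
      have hmem : Set.Ioo (-δ) (0:ℝ) ∈ 𝓝[<] (0:ℝ) :=
        Ioo_mem_nhdsLT_of_mem ⟨by linarith, le_rfl⟩
      filter_upwards [hmem] with ε hε
      have h1 : |ε| < δ := by rw [abs_lt]; exact ⟨hε.1, by linarith [hε.2]⟩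
      have := hineq ε h1
      rw [abs_zero, zero_add, abs_of_neg hε.2] at this
      rw [slope_def_field, div_le_iff_of_neg (by linarith [hε.2] : ε - 0 < 0)]
      nlinarith [hε.2]
    have hlb : -(c * γ1) ≤ c * g := by
      apply ge_of_tendsto hright
      have hmem : Set.Ioo (0:ℝ) δ ∈ 𝓝[>] (0:ℝ) :=
        Ioo_mem_nhdsGT_of_mem ⟨le_rfl, hδ⟩
      filter_upwards [hmem] with ε hε
      have h1 : |ε| < δ := by rw [abs_lt]; exact ⟨by linarith [hε.1], hε.2⟩
      have := hineq ε h1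
      rw [abs_zero, zero_add, abs_of_pos hε.1] at this
      rw [slope_def_field, le_div_iff₀ (by linarith [hε.1] : 0 < ε - 0)]
      nlinarith [hε.1]
    rw [abs_le]
    constructor <;> [nlinarith; nlinarith]


def eMat {p : ℕ} (i j : Fin p) : Matrix (Fin p) (Fin p) ℝ :=
  Matrix.of fun k l => if k = i ∧ l = j then 1 else 0

lemma eMat_apply {p : ℕ} (i j k l : Fin p) :
    eMat i j k l = if k = i ∧ l = j then 1 else 0 := rfl

lemma trace_mul_eMat {p : ℕ} (M : Matrix (Fin p) (Fin p) ℝ) (i j : Fin p) :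
    (M * eMat i j).trace = M j i := by
  simp [Matrix.trace, Matrix.diag, Matrix.mul_apply, eMat_apply, ite_and, Finset.sum_ite_eq]

lemma sumsum_mul_eMat {p : ℕ} (M : Matrix (Fin p) (Fin p) ℝ) (i j : Fin p) :
    ∑ k, ∑ l, M k l * eMat i j k l = M i j := by
  simp [eMat_apply, ite_and, Finset.sum_ite_eq, mul_ite]

lemma dot_eMat {p : ℕ} (x : Fin p → ℝ) (i j : Fin p) :
    dotProduct x (eMat i j *ᵥ x) = x i * x j := by
  simp [dotProduct, Matrix.mulVec, eMat_apply, ite_and, Finset.sum_ite_eq, mul_ite]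

lemma transpose_eMat {p : ℕ} (i j : Fin p) : (eMat i j)ᵀ = eMat j i := by
  ext k l
  simp [eMat_apply, Matrix.transpose_apply, and_comm]

lemma conjTranspose_eMat {p : ℕ} (i j : Fin p) : (eMat i j)ᴴ = eMat j i := by
  ext k l
  simp [eMat_apply, Matrix.conjTranspose_apply, and_comm]

lemma dsum_two {p : ℕ} {i j : Fin p} (hij : i ≠ j) (h : Fin p → Fin p → ℝ)
    (hsupp : ∀ k l, ¬(k = i ∧ l = j) → ¬(k = j ∧ l = i) → h k l = 0) :
    ∑ k, ∑ l, h k l = h i j + h j i := by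
  rw [← Finset.sum_product']
  rw [← Finset.sum_subset (s₁ := ({(i,j), (j,i)} : Finset (Fin p × Fin p)))
    (by intro x _; simp [Finset.mem_product])]
  · rw [Finset.sum_pair (by simp [hij, Prod.ext_iff] : ((i,j) : Fin p × Fin p) ≠ (j,i))]
  · intro x _ hx
    simp only [Finset.mem_insert, Finset.mem_singleton] at hx
    push_neg at hx
    exact hsupp x.1 x.2 (fun ⟨h1, h2⟩ => hx.1 (Prod.ext h1 h2))
      (fun ⟨h1, h2⟩ => hx.2 (Prod.ext h1 h2))

lemma dsum_one {p : ℕ} {i : Fin p} (h : Fin p → Fin p → ℝ)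
    (hsupp : ∀ k l, ¬(k = i ∧ l = i) → h k l = 0) :
    ∑ k, ∑ l, h k l = h i i := by
  rw [← Finset.sum_product']
  rw [← Finset.sum_subset (s₁ := ({(i,i)} : Finset (Fin p × Fin p)))
    (by intro x _; simp [Finset.mem_product])]
  · rw [Finset.sum_singleton]
  · intro x _ hx
    simp only [Finset.mem_singleton] at hx
    exact hsupp x.1 x.2 (fun ⟨h1, h2⟩ => hx (Prod.ext h1 h2))

lemma l1_expand {p : ℕ} (M : Matrix (Fin p) (Fin p) ℝ) (D : Matrix (Fin p) (Fin p) ℝ) (ε : ℝ) :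
    l1Norm (M + ε • D) = l1Norm M + ∑ k, ∑ l, (|M k l + ε * D k l| - |M k l|) := by
  unfold l1Norm
  rw [← Finset.sum_add_distrib]
  apply Finset.sum_congr rfl
  intro k _
  rw [← Finset.sum_add_distrib]
  apply Finset.sum_congr rfl
  intro l _
  simp [Matrix.add_apply, Matrix.smul_apply, smul_eq_mul]

lemma dot_self_pos {p : ℕ} {x : Fin p → ℝ} (hx : x ≠ 0) : 0 < dotProduct x x := by
  rcases Function.ne_iff.mp hx with ⟨k, hk⟩
  apply Finset.sum_pos' (fun l _ => mul_self_nonneg _)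
  exact ⟨k, Finset.mem_univ k, mul_self_pos.mpr hk⟩

lemma posdef_perturb {p : ℕ} (Ω D : Matrix (Fin p) (Fin p) ℝ) (a ε : ℝ)
    (hΩ : Ω.PosDef) (hs1 : (Ω - a • (1 : Matrix (Fin p) (Fin p) ℝ)).PosSemidef)
    (hD : D.IsHermitian) (hDb : ∀ x : Fin p → ℝ, |dotProduct x (D *ᵥ x)| ≤ dotProduct x x)
    (hε : |ε| < a) : (Ω + ε • D).PosDef := by
  refine Matrix.PosDef.of_dotProduct_mulVec_pos ?_ ?_
  · have hsm : (ε • D).IsHermitian := by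
      unfold Matrix.IsHermitian
      rw [Matrix.conjTranspose_smul, star_trivial, hD.eq]
    exact hΩ.1.add hsm
  · intro x hx
    rw [star_trivial, Matrix.add_mulVec, Matrix.smul_mulVec, dotProduct_add,
      dotProduct_smul, smul_eq_mul]
    have h1 : a * dotProduct x x ≤ dotProduct x (Ω *ᵥ x) := by
      have := hs1.dotProduct_mulVec_nonneg x
      rw [star_trivial, Matrix.sub_mulVec, dotProduct_sub, Matrix.smul_mulVec,
        Matrix.one_mulVec, dotProduct_smul, smul_eq_mul] at this
      linarith
    have h2 : |ε * dotProduct x (D *ᵥ x)| ≤ |ε| * dotProduct x x := by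
      rw [abs_mul]
      exact mul_le_mul_of_nonneg_left (hDb x) (abs_nonneg ε)
    have h3 := dot_self_pos hx
    nlinarith [neg_abs_le (ε * dotProduct x (D *ᵥ x))]

lemma genObj_eq {n : Type*} [Fintype n] [DecidableEq n] (S : Matrix n n ℝ) (γ1 γ2 : ℝ)
    (M : Matrix n n ℝ) :
    genObj S γ1 γ2 M = (S * M).trace - Real.log M.det + γ1 * l1Norm M + γ2 * frobSq M := by
  unfold genObj
  rw [frobNorm_eq, Real.sq_sqrt (frobSq_nonneg M)]

lemma grad_condition_aux {p : ℕ} (S Ω : Matrix (Fin p) (Fin p) ℝ)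
    (γ1 γ2 a c x g : ℝ) (D : Matrix (Fin p) (Fin p) ℝ)
    (hγ1 : 0 < γ1) (hc : 0 < c) (ha : 0 < a) (hΩ : Ω.PosDef)
    (hs1 : (Ω - a • (1 : Matrix (Fin p) (Fin p) ℝ)).PosSemidef)
    (hmin : ∀ M : Matrix (Fin p) (Fin p) ℝ, M.PosDef →
      genObj S γ1 γ2 Ω ≤ genObj S γ1 γ2 M)
    (hD : D.IsHermitian)
    (hDb : ∀ y : Fin p → ℝ, |dotProduct y (D *ᵥ y)| ≤ dotProduct y y)
    (hl1 : ∀ ε : ℝ, l1Norm (Ω + ε • D) = l1Norm Ω + c * (|x + ε| - |x|))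
    (hderiv : (S * D).trace - (Ω⁻¹ * D).trace
        + γ2 * (2 * ∑ k, ∑ l, Ω k l * D k l) = c * g) :
    (0 < x → g = -γ1) ∧ (x < 0 → g = γ1) ∧ (x = 0 → |g| ≤ γ1) := by
  have hdet : Ω.det ≠ 0 := ne_of_gt hΩ.det_pos
  set f : ℝ → ℝ := fun ε => (S * (Ω + ε • D)).trace - Real.log (Ω + ε • D).det
      + γ2 * frobSq (Ω + ε • D) with hfdef
  have hfd : HasDerivAt f (c * g) 0 := by
    rw [← hderiv]
    exact hasDerivAt_smoothpart S Ω D hdet γ2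
  apply scalar1D hc hγ1 ha hfd
  intro ε hε
  have hpd := posdef_perturb Ω D a ε hΩ hs1 hD hDb hε
  have hle := hmin (Ω + ε • D) hpd
  rw [genObj_eq, genObj_eq, hl1 ε] at hle
  have h0 : Ω + (0:ℝ) • D = Ω := by rw [zero_smul, add_zero]
  have hf0 : f 0 = (S * Ω).trace - Real.log Ω.det + γ2 * frobSq Ω := by
    show (S * (Ω + (0:ℝ) • D)).trace - Real.log (Ω + (0:ℝ) • D).det
      + γ2 * frobSq (Ω + (0:ℝ) • D) = _
    rw [h0]
  have hfε : f ε = (S * (Ω + ε • D)).trace - Real.log (Ω + ε • D).det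
      + γ2 * frobSq (Ω + ε • D) := rfl
  rw [hf0, hfε]
  ring_nf
  ring_nf at hle
  linarith

lemma grad_condition {p : ℕ} (S Ω : Matrix (Fin p) (Fin p) ℝ) (hS : S.IsHermitian)
    (γ1 γ2 a : ℝ) (hγ1 : 0 < γ1) (ha : 0 < a) (hΩ : Ω.PosDef)
    (hs1 : (Ω - a • (1 : Matrix (Fin p) (Fin p) ℝ)).PosSemidef)
    (hmin : ∀ M : Matrix (Fin p) (Fin p) ℝ, M.PosDef →
      genObj S γ1 γ2 Ω ≤ genObj S γ1 γ2 M)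
    (i j : Fin p) :
    (0 < Ω i j → (S - Ω⁻¹ + (2*γ2) • Ω) i j = -γ1) ∧
    (Ω i j < 0 → (S - Ω⁻¹ + (2*γ2) • Ω) i j = γ1) ∧
    (Ω i j = 0 → |(S - Ω⁻¹ + (2*γ2) • Ω) i j| ≤ γ1) := by
  have hinvH : Ω⁻¹.IsHermitian := hΩ.1.inv
  have hentry : (S - Ω⁻¹ + (2*γ2) • Ω) i j
      = S i j - Ω⁻¹ i j + 2 * γ2 * Ω i j := by
    simp [Matrix.sub_apply, Matrix.add_apply, Matrix.smul_apply, smul_eq_mul]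
  by_cases hij : i = j
  · subst hij
    apply grad_condition_aux S Ω γ1 γ2 a 1 (Ω i i)
      (S i i - Ω⁻¹ i i + 2 * γ2 * Ω i i) (eMat i i) hγ1 one_pos ha hΩ hs1 hmin
      (conjTranspose_eMat i i)
    · intro y
      rw [dot_eMat]
      rw [abs_of_nonneg (mul_self_nonneg _)]
      exact Finset.single_le_sum (f := fun k => y k * y k)
        (fun k _ => mul_self_nonneg _) (Finset.mem_univ i)
    · intro ε
      rw [l1_expand]
      congr 1
      rw [dsum_one (i := i)]
      · rw [eMat_apply, if_pos ⟨rfl, rfl⟩, one_mul, mul_one]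
      · intro k l hkl
        rw [eMat_apply, if_neg hkl, mul_zero, add_zero, sub_self]
    · rw [trace_mul_eMat, trace_mul_eMat, sumsum_mul_eMat]
      ring
  · have hsym : Ω j i = Ω i j := by
      have := congrFun (congrFun hΩ.1 i) j
      rw [Matrix.conjTranspose_apply, star_trivial] at this
      exact this
    have hsymS : S j i = S i j := by
      have := congrFun (congrFun hS i) j
      rw [Matrix.conjTranspose_apply, star_trivial] at this
      exact this
    have hsymI : Ω⁻¹ j i = Ω⁻¹ i j := by
      have := congrFun (congrFun hinvH i) j
      rw [Matrix.conjTranspose_apply, star_trivial] at this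
      exact this
    have hji : j ≠ i := fun h => hij h.symm
    have hDij : ∀ k l, (eMat i j + eMat j i) k l
        = (if k = i ∧ l = j then (1:ℝ) else 0) + (if k = j ∧ l = i then 1 else 0) := by
      intro k l
      rw [Matrix.add_apply, eMat_apply, eMat_apply]
    apply grad_condition_aux S Ω γ1 γ2 a 2 (Ω i j)
      (S i j - Ω⁻¹ i j + 2 * γ2 * Ω i j) (eMat i j + eMat j i) hγ1 two_pos ha hΩ hs1 hmin
    · unfold Matrix.IsHermitian
      rw [Matrix.conjTranspose_add, conjTranspose_eMat, conjTranspose_eMat, add_comm]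
    · intro y
      rw [Matrix.add_mulVec, dotProduct_add, dot_eMat, dot_eMat]
      have hsub : y i * y i + y j * y j ≤ dotProduct y y := by
        have : ∑ k ∈ ({i, j} : Finset (Fin p)), y k * y k ≤ ∑ k, y k * y k :=
          Finset.sum_le_sum_of_subset_of_nonneg (Finset.subset_univ _)
            (fun k _ _ => mul_self_nonneg _)
        rwa [Finset.sum_pair hij] at this
      rw [abs_le]
      constructor <;> nlinarith [sq_nonneg (y i + y j), sq_nonneg (y i - y j)]
    · intro ε
      have d1 : (eMat i j + eMat j i) i j = 1 := by
        rw [hDij i j, if_neg (fun h : i = j ∧ j = i => hij h.1),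
          if_pos (⟨rfl, rfl⟩ : i = i ∧ j = j), add_zero]
      have d2 : (eMat i j + eMat j i) j i = 1 := by
        rw [hDij j i, if_neg (fun h : j = i ∧ i = j => hij h.2),
          if_pos (⟨rfl, rfl⟩ : j = j ∧ i = i), zero_add]
      rw [l1_expand]
      congr 1
      rw [dsum_two hij]
      · rw [d1, d2, hsym]
        ring
      · intro k l h1 h2
        rw [hDij k l, if_neg h1, if_neg h2, add_zero, mul_zero, add_zero, sub_self]
    · rw [Matrix.mul_add, Matrix.mul_add, Matrix.trace_add, Matrix.trace_add,
        trace_mul_eMat, trace_mul_eMat, trace_mul_eMat, trace_mul_eMat]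
      have hsums : ∑ k, ∑ l, Ω k l * (eMat i j + eMat j i) k l = Ω i j + Ω j i := by
        have : ∀ k l, Ω k l * (eMat i j + eMat j i) k l
            = Ω k l * eMat i j k l + Ω k l * eMat j i k l := by
          intro k l
          rw [Matrix.add_apply]
          ring
        calc ∑ k, ∑ l, Ω k l * (eMat i j + eMat j i) k l
            = ∑ k, ∑ l, (Ω k l * eMat i j k l + Ω k l * eMat j i k l) := by
              apply Finset.sum_congr rfl; intro k _
              apply Finset.sum_congr rfl; intro l _
              exact this k l
          _ = ∑ k, ((∑ l, Ω k l * eMat i j k l) + ∑ l, Ω k l * eMat j i k l) :=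
              Finset.sum_congr rfl (fun k _ => Finset.sum_add_distrib)
          _ = (∑ k, ∑ l, Ω k l * eMat i j k l) + ∑ k, ∑ l, Ω k l * eMat j i k l :=
              Finset.sum_add_distrib
          _ = Ω i j + Ω j i := by rw [sumsum_mul_eMat, sumsum_mul_eMat]
      rw [hsums, hsym, hsymS, hsymI]
      ring


end Helpers

/-- one-step contraction bound for the GEN-ISTA update. -/
theorem stmt4 {p : ℕ} (hp : 0 < p)
    (S : Matrix (Fin p) (Fin p) ℝ) (hS : S.IsHermitian)
    (γ1 γ2 : ℝ) (hγ1 : 0 < γ1) (hγ2 : 0 < γ2)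
    (a b : ℝ) (ha : 0 < a) (hab : a < b)
    (Ωstar : Matrix (Fin p) (Fin p) ℝ) (hΩstar : Ωstar.PosDef)
    (hmin : ∀ M : Matrix (Fin p) (Fin p) ℝ, M.PosDef →
      genObj S γ1 γ2 Ωstar ≤ genObj S γ1 γ2 M)
    (hs1 : loewnerLE (a • (1 : Matrix (Fin p) (Fin p) ℝ)) Ωstar)
    (hs2 : loewnerLE Ωstar (b • (1 : Matrix (Fin p) (Fin p) ℝ)))
    (Ωk : Matrix (Fin p) (Fin p) ℝ) (hΩk : Ωk.PosDef)
    (hk1 : loewnerLE (a • (1 : Matrix (Fin p) (Fin p) ℝ)) Ωk)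
    (hk2 : loewnerLE Ωk (b • (1 : Matrix (Fin p) (Fin p) ℝ)))
    (t : ℝ) (ht0 : 0 < t) (ht : t ≤ a^2 / (2*a^2*γ2 + 1))
    (mt : ℝ) (hmt : mt = 1 - 2*t*γ2) :
    frobNorm (Sft (Ωk - t • (S - Ωk⁻¹ + (2*γ2) • Ωk)) (t*γ1) - Ωstar) ≤
      max |mt - t/a^2| |mt - t/b^2| * frobNorm (Ωk - Ωstar) := by
  have hτ : 0 ≤ t * γ1 := le_of_lt (mul_pos ht0 hγ1)
  set Gk := Ωk - t • (S - Ωk⁻¹ + (2*γ2) • Ωk) with hGk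
  set Gs := Ωstar - t • (S - Ωstar⁻¹ + (2*γ2) • Ωstar) with hGs
  -- Step 1: fixed point
  have hfix : Sft Gs (t*γ1) = Ωstar := by
    ext i j
    have hcond := grad_condition S Ωstar hS γ1 γ2 a hγ1 ha hΩstar hs1 hmin i j
    have hentry : Gs i j = Ωstar i j - t * ((S - Ωstar⁻¹ + (2*γ2) • Ωstar) i j) := rfl
    show sft (Gs i j) (t*γ1) = Ωstar i j
    rw [hentry]
    exact sft_fixed hγ1 ht0 hcond.1 hcond.2.1 hcond.2.2
  -- Step 2: Lipschitz of soft-thresholding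
  have hlip : frobNorm (Sft Gk (t*γ1) - Ωstar) ≤ frobNorm (Gk - Gs) := by
    rw [← hfix]
    apply frobNorm_mono
    intro i j
    have h1 : (Sft Gk (t*γ1) - Sft Gs (t*γ1)) i j = sft (Gk i j) (t*γ1) - sft (Gs i j) (t*γ1) := rfl
    have h2 : (Gk - Gs) i j = Gk i j - Gs i j := rfl
    rw [h1, h2, ← abs_abs (Gk i j - Gs i j)]
    exact le_trans (sft_lipschitz (t*γ1) hτ _ _) (le_abs_self _)
  -- Step 3: rewrite the difference
  set Δ := Ωk - Ωstar with hΔ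
  have hdetk : IsUnit Ωk.det := isUnit_iff_ne_zero.mpr (ne_of_gt hΩk.det_pos)
  have hdets : IsUnit Ωstar.det := isUnit_iff_ne_zero.mpr (ne_of_gt hΩstar.det_pos)
  have h1 : Ωk⁻¹ * Δ * Ωstar⁻¹ = Ωstar⁻¹ - Ωk⁻¹ := by
    rw [hΔ, Matrix.mul_sub, Matrix.nonsing_inv_mul Ωk hdetk, Matrix.sub_mul, Matrix.one_mul,
      Matrix.mul_assoc, Matrix.mul_nonsing_inv Ωstar hdets, Matrix.mul_one]
  have hdiff : Gk - Gs = mt • Δ - t • (Ωk⁻¹ * Δ * Ωstar⁻¹) := by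
    rw [h1, hmt, hGk, hGs, hΔ]
    module
  -- Step 4: spectral decompositions and contraction
  obtain ⟨U, lam, hU1, hU2, hlam, hUeq⟩ := inv_decomp Ωk hΩk a b ha hab hk1 hk2
  obtain ⟨V, mu, hV1, hV2, hmu, hVeq⟩ := inv_decomp Ωstar hΩstar a b ha hab hs1 hs2
  have hb : 0 < b := lt_trans ha hab
  have hcontr : frobNorm (mt • Δ - t • (Ωk⁻¹ * Δ * Ωstar⁻¹)) ≤
      max |mt - t * (1/b)^2| |mt - t * (1/a)^2| * frobNorm Δ := by
    rw [hUeq, hVeq]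
    exact keyContract mt t (1/b) (1/a) (le_of_lt ht0) (by positivity) U V hU1 hU2 hV1 hV2
      lam mu hlam hmu Δ
  have hmax : max |mt - t * (1/b)^2| |mt - t * (1/a)^2| = max |mt - t/a^2| |mt - t/b^2| := by
    rw [div_pow, one_pow, div_pow, one_pow, mul_one_div, mul_one_div, max_comm]
  calc frobNorm (Sft Gk (t*γ1) - Ωstar) ≤ frobNorm (Gk - Gs) := hlip
    _ = frobNorm (mt • Δ - t • (Ωk⁻¹ * Δ * Ωstar⁻¹)) := by rw [hdiff]
    _ ≤ max |mt - t * (1/b)^2| |mt - t * (1/a)^2| * frobNorm Δ := hcontr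
    _ = max |mt - t/a^2| |mt - t/b^2| * frobNorm (Ωk - Ωstar) := by rw [hmax]
end

section
/- Let γ2 > 0 and t > 0, and let Ω be a symmetric positive definite p×p matrix with aI ⪯ Ω ⪯ bI for 0 < a < b. Define Ω_half = Ω − t(S̃ − Ω⁻¹ + 2γ2·Ω) and m_t = 1 − 2tγ2. Then ρ_1(Ω_half) ≤ max(m_t·a + t/a, m_t·b + t/b) − t·ρ_p(S̃). -/
open Matrix BigOperators Kronecker

variable {p : ℕ}

lemma scalar_bound {t mt a b x : ℝ} (ht : 0 < t) (ha : 0 < a) (hab : a < b)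
    (hax : a ≤ x) (hxb : x ≤ b) :
    mt * x + t * x⁻¹ ≤ max (mt * a + t / a) (mt * b + t / b) := by
  have hx : 0 < x := lt_of_lt_of_le ha hax
  have hb : 0 < b := ha.trans hab
  set s : ℝ := t / (a * b) with hs_def
  have hsa : t / a = s * b := by rw [hs_def]; field_simp
  have hsb : t / b = s * a := by rw [hs_def]; field_simp
  have key : t * x⁻¹ ≤ s * (a + b - x) := by
    rw [← div_eq_mul_inv, hs_def, div_mul_eq_mul_div, div_le_div_iff₀ hx (mul_pos ha hb)]
    nlinarith [mul_nonneg (sub_nonneg.2 hax) (sub_nonneg.2 hxb), ht.le]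
  rcases le_or_gt 0 (mt - s) with hs | hs
  · refine le_trans ?_ (le_max_right _ _)
    rw [hsb]
    nlinarith [mul_nonneg hs (sub_nonneg.2 hxb)]
  · refine le_trans ?_ (le_max_left _ _)
    rw [hsa]
    nlinarith [mul_nonpos_of_nonpos_of_nonneg (sub_nonpos.2 hs.le) (sub_nonneg.2 hax)]

lemma psd_conj_iff (U : Matrix.unitaryGroup (Fin p) ℝ) (A : Matrix (Fin p) (Fin p) ℝ) :
    ((star (U : Matrix (Fin p) (Fin p) ℝ)) * A * U).PosSemidef ↔ A.PosSemidef := by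
  have h1 : (U : Matrix (Fin p) (Fin p) ℝ) * star (U : Matrix (Fin p) (Fin p) ℝ) = 1 :=
    (Matrix.mem_unitaryGroup_iff).mp U.2
  constructor
  · intro h
    have := h.mul_mul_conjTranspose_same (U : Matrix (Fin p) (Fin p) ℝ)
    rw [← Matrix.star_eq_conjTranspose] at this
    have e : (U : Matrix (Fin p) (Fin p) ℝ) * ((star (U : Matrix (Fin p) (Fin p) ℝ)) * A * U) *
        star (U : Matrix (Fin p) (Fin p) ℝ) = A := by
      rw [Matrix.mul_assoc, Matrix.mul_assoc, h1, Matrix.mul_one, ← Matrix.mul_assoc, h1,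
        Matrix.one_mul]
    rwa [e] at this
  · intro h
    have := h.conjTranspose_mul_mul_same (U : Matrix (Fin p) (Fin p) ℝ)
    rwa [← Matrix.star_eq_conjTranspose] at this

lemma conj_eq_diag {A : Matrix (Fin p) (Fin p) ℝ} (hA : A.IsHermitian) :
    (star (hA.eigenvectorUnitary : Matrix (Fin p) (Fin p) ℝ)) * A *
      (hA.eigenvectorUnitary : Matrix (Fin p) (Fin p) ℝ) = diagonal hA.eigenvalues := by
  have := hA.conjStarAlgAut_star_eigenvectorUnitary
  simpa using this

lemma star_mul_self_one {A : Matrix (Fin p) (Fin p) ℝ} (hA : A.IsHermitian) :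
    (star (hA.eigenvectorUnitary : Matrix (Fin p) (Fin p) ℝ)) *
      (hA.eigenvectorUnitary : Matrix (Fin p) (Fin p) ℝ) = 1 :=
  Matrix.UnitaryGroup.star_mul_self _

lemma psd_smul_one_sub_iff {A : Matrix (Fin p) (Fin p) ℝ} (hA : A.IsHermitian) (c : ℝ) :
    (c • (1 : Matrix (Fin p) (Fin p) ℝ) - A).PosSemidef ↔ ∀ i, hA.eigenvalues i ≤ c := by
  rw [← psd_conj_iff hA.eigenvectorUnitary]
  have e : (star (hA.eigenvectorUnitary : Matrix (Fin p) (Fin p) ℝ)) *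
      (c • (1 : Matrix (Fin p) (Fin p) ℝ) - A) *
      (hA.eigenvectorUnitary : Matrix (Fin p) (Fin p) ℝ)
      = diagonal (fun i => c - hA.eigenvalues i) := by
    rw [Matrix.mul_sub, Matrix.sub_mul, conj_eq_diag hA, mul_smul_comm, smul_mul_assoc,
      Matrix.mul_one, star_mul_self_one hA]
    ext i j
    by_cases h : i = j <;> simp [Matrix.diagonal_apply, Matrix.one_apply, h]
  rw [e, Matrix.posSemidef_diagonal_iff]
  exact forall_congr' fun i => by constructor <;> intro h <;> linarith

lemma psd_sub_smul_one_iff {A : Matrix (Fin p) (Fin p) ℝ} (hA : A.IsHermitian) (c : ℝ) :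
    (A - c • (1 : Matrix (Fin p) (Fin p) ℝ)).PosSemidef ↔ ∀ i, c ≤ hA.eigenvalues i := by
  rw [← psd_conj_iff hA.eigenvectorUnitary]
  have e : (star (hA.eigenvectorUnitary : Matrix (Fin p) (Fin p) ℝ)) *
      (A - c • (1 : Matrix (Fin p) (Fin p) ℝ)) *
      (hA.eigenvectorUnitary : Matrix (Fin p) (Fin p) ℝ)
      = diagonal (fun i => hA.eigenvalues i - c) := by
    rw [Matrix.mul_sub, Matrix.sub_mul, conj_eq_diag hA, mul_smul_comm, smul_mul_assoc,
      Matrix.mul_one, star_mul_self_one hA]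
    ext i j
    by_cases h : i = j <;> simp [Matrix.diagonal_apply, Matrix.one_apply, h]
  rw [e, Matrix.posSemidef_diagonal_iff]
  exact forall_congr' fun i => by constructor <;> intro h <;> linarith

lemma spectral_real {A : Matrix (Fin p) (Fin p) ℝ} (hA : A.IsHermitian) :
    A = (hA.eigenvectorUnitary : Matrix (Fin p) (Fin p) ℝ) * diagonal hA.eigenvalues *
      (star (hA.eigenvectorUnitary : Matrix (Fin p) (Fin p) ℝ)) := by
  have := hA.spectral_theorem
  simpa using this

lemma conj_inv_generic {U : Matrix (Fin p) (Fin p) ℝ} (hUs : U * star U = 1)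
    (hsU : star U * U = 1) (d : Fin p → ℝ) (hd : ∀ i, d i ≠ 0) :
    (U * diagonal d * star U)⁻¹ = U * diagonal (fun i => (d i)⁻¹) * star U := by
  apply Matrix.inv_eq_right_inv
  rw [Matrix.mul_assoc, Matrix.mul_assoc, ← Matrix.mul_assoc (star U),
    ← Matrix.mul_assoc (star U), hsU, Matrix.one_mul, ← Matrix.mul_assoc (diagonal d),
    diagonal_mul_diagonal]
  have : (fun i => d i * (d i)⁻¹) = fun _ => (1:ℝ) := by
    funext i; exact mul_inv_cancel₀ (hd i)
  rw [this, diagonal_one, Matrix.one_mul, hUs]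

lemma conj_inv_eq_diag {Ω : Matrix (Fin p) (Fin p) ℝ} (hΩ : Ω.PosDef) :
    (star (hΩ.1.eigenvectorUnitary : Matrix (Fin p) (Fin p) ℝ)) * Ω⁻¹ *
      (hΩ.1.eigenvectorUnitary : Matrix (Fin p) (Fin p) ℝ)
      = diagonal (fun i => (hΩ.1.eigenvalues i)⁻¹) := by
  set U : Matrix (Fin p) (Fin p) ℝ := (hΩ.1.eigenvectorUnitary : Matrix (Fin p) (Fin p) ℝ)
    with hU
  have hUs : U * star U = 1 := (Matrix.mem_unitaryGroup_iff).mp hΩ.1.eigenvectorUnitary.2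
  have hsU : star U * U = 1 := Matrix.UnitaryGroup.star_mul_self _
  have hinv : Ω⁻¹ = U * diagonal (fun i => (hΩ.1.eigenvalues i)⁻¹) * star U := by
    have h1 : Ω⁻¹ = (U * diagonal hΩ.1.eigenvalues * star U)⁻¹ :=
      congrArg Inv.inv (spectral_real hΩ.1)
    rw [h1, conj_inv_generic hUs hsU _ (fun i => (hΩ.eigenvalues_pos i).ne')]
  rw [hinv, Matrix.mul_assoc, Matrix.mul_assoc, hsU, Matrix.mul_one, ← Matrix.mul_assoc, hsU,
    Matrix.one_mul]

lemma isHermitian_smul_real {q : ℕ} {A : Matrix (Fin q) (Fin q) ℝ} (hA : A.IsHermitian)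
    (c : ℝ) : (c • A).IsHermitian := by
  have := hA.eq
  simp only [Matrix.IsHermitian, Matrix.conjTranspose_smul, this, star_trivial]

/-- upper eigenvalue bound for the gradient step. -/
theorem stmt9 {p : ℕ} (hp : 0 < p)
    (S : Matrix (Fin p) (Fin p) ℝ) (hS : S.IsHermitian)
    (γ2 t : ℝ) (hγ2 : 0 < γ2) (ht : 0 < t)
    (a b : ℝ) (ha : 0 < a) (hab : a < b)
    (Ω : Matrix (Fin p) (Fin p) ℝ) (hΩ : Ω.PosDef)
    (hl : loewnerLE (a • (1 : Matrix (Fin p) (Fin p) ℝ)) Ω)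
    (hu : loewnerLE Ω (b • (1 : Matrix (Fin p) (Fin p) ℝ)))
    (Ωhalf : Matrix (Fin p) (Fin p) ℝ)
    (hhalf : Ωhalf = Ω - t • (S - Ω⁻¹ + (2*γ2) • Ω))
    (mt : ℝ) (hmt : mt = 1 - 2*t*γ2) :
    maxEig Ωhalf ≤ max (mt * a + t / a) (mt * b + t / b) - t * minEig S := by
  have : Nonempty (Fin p) := ⟨⟨0, hp⟩⟩
  have hH : Ω.IsHermitian := hΩ.1
  set ev : Fin p → ℝ := hH.eigenvalues with hev
  set C : ℝ := max (mt * a + t / a) (mt * b + t / b) with hC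
  -- eigenvalue bounds for Ω
  have hlo : ∀ i, a ≤ ev i := (psd_sub_smul_one_iff hH a).mp hl
  have hhi : ∀ i, ev i ≤ b := (psd_smul_one_sub_iff hH b).mp hu
  -- minEig S bounds
  have hminS : ∀ i, minEig S ≤ hS.eigenvalues i := by
    intro i
    rw [minEig, dif_pos hS]
    exact ciInf_le (Set.Finite.bddBelow (Set.finite_range _)) i
  -- Hermitian-ness of Ωhalf
  have hHh : Ωhalf.IsHermitian := by
    rw [hhalf]
    exact hH.sub (isHermitian_smul_real ((hS.sub hH.inv).add (isHermitian_smul_real hH (2*γ2))) t)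
  -- P1 positive semidefinite
  have hP1 : (C • (1 : Matrix (Fin p) (Fin p) ℝ) - (mt • Ω + t • Ω⁻¹)).PosSemidef := by
    rw [← psd_conj_iff hH.eigenvectorUnitary]
    set U : Matrix (Fin p) (Fin p) ℝ := (hH.eigenvectorUnitary : Matrix (Fin p) (Fin p) ℝ)
    have key : star U * (C • (1 : Matrix (Fin p) (Fin p) ℝ) - (mt • Ω + t • Ω⁻¹)) * U
        = C • (star U * 1 * U) - (mt • (star U * Ω * U) + t • (star U * Ω⁻¹ * U)) := by
      simp only [Matrix.mul_sub, Matrix.sub_mul, Matrix.mul_add, Matrix.add_mul,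
        mul_smul_comm, smul_mul_assoc]
    rw [key, Matrix.mul_one, star_mul_self_one hH, conj_eq_diag hH, conj_inv_eq_diag hΩ]
    have e : C • (1 : Matrix (Fin p) (Fin p) ℝ) -
        (mt • diagonal ev + t • diagonal (fun i => (ev i)⁻¹))
        = diagonal (fun i => C - (mt * ev i + t * (ev i)⁻¹)) := by
      ext i j
      by_cases h : i = j <;> simp [Matrix.diagonal_apply, Matrix.one_apply, h]
    rw [e, Matrix.posSemidef_diagonal_iff]
    intro i
    have := scalar_bound (mt := mt) ht ha hab (hlo i) (hhi i)
    rw [← hC] at this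
    linarith
  -- P2 positive semidefinite
  have hP2 : (t • S - (t * minEig S) • (1 : Matrix (Fin p) (Fin p) ℝ)).PosSemidef := by
    rw [← psd_conj_iff hS.eigenvectorUnitary]
    set Us : Matrix (Fin p) (Fin p) ℝ := (hS.eigenvectorUnitary : Matrix (Fin p) (Fin p) ℝ)
    have key : star Us * (t • S - (t * minEig S) • (1 : Matrix (Fin p) (Fin p) ℝ)) * Us
        = t • (star Us * S * Us) - (t * minEig S) • (star Us * 1 * Us) := by
      simp only [Matrix.mul_sub, Matrix.sub_mul, mul_smul_comm, smul_mul_assoc]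
    rw [key, Matrix.mul_one, star_mul_self_one hS, conj_eq_diag hS]
    have e : t • diagonal hS.eigenvalues -
        (t * minEig S) • (1 : Matrix (Fin p) (Fin p) ℝ)
        = diagonal (fun i => t * hS.eigenvalues i - t * minEig S) := by
      ext i j
      by_cases h : i = j <;> simp [Matrix.diagonal_apply, Matrix.one_apply, h]
    rw [e, Matrix.posSemidef_diagonal_iff]
    intro i
    have := hminS i
    nlinarith
  -- combine
  have hsum : ((C - t * minEig S) • (1 : Matrix (Fin p) (Fin p) ℝ) - Ωhalf).PosSemidef := by
    have e : (C - t * minEig S) • (1 : Matrix (Fin p) (Fin p) ℝ) - Ωhalf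
        = (C • (1 : Matrix (Fin p) (Fin p) ℝ) - (mt • Ω + t • Ω⁻¹))
          + (t • S - (t * minEig S) • (1 : Matrix (Fin p) (Fin p) ℝ)) := by
      rw [hhalf, hmt]
      module
    rw [e]
    exact hP1.add hP2
  have hevb : ∀ i, hHh.eigenvalues i ≤ C - t * minEig S :=
    (psd_smul_one_sub_iff hHh _).mp hsum
  rw [maxEig, dif_pos hHh]
  exact ciSup_le hevb
end

section
/- Let γ1 > 0 and γ2 > 0, and let α be as defined below. Suppose α < b' and αI ⪯ Ω^{(k)} ⪯ b'I for some constant b', and let Ω^{(k+1)} = Sft(Ω^{(k)} − t(S̃ − (Ω^{(k)})⁻¹ + 2γ2·Ω^{(k)}), t·γ1). Then for every step size 0 < t ≤ α²/(2γ2·α² + 1), the updated iterate satisfies αI ⪯ Ω^{(k+1)}. -/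
open Matrix BigOperators Kronecker

namespace Stmt12Aux

variable {p : ℕ}

lemma star_vec (x : Fin p → ℝ) : star x = x := by funext i; simp

lemma herm_smul {A : Matrix (Fin p) (Fin p) ℝ} (c : ℝ) (hA : A.IsHermitian) :
    (c • A).IsHermitian := by
  unfold Matrix.IsHermitian
  rw [Matrix.conjTranspose_smul, hA.eq, star_trivial]

lemma psd_smul {A : Matrix (Fin p) (Fin p) ℝ} {c : ℝ} (hc : 0 ≤ c) (hA : A.PosSemidef) :
    (c • A).PosSemidef := by
  refine Matrix.PosSemidef.of_dotProduct_mulVec_nonneg (herm_smul c hA.1) fun x => ?_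
  rw [Matrix.smul_mulVec, dotProduct_smul, smul_eq_mul]
  exact mul_nonneg hc (hA.dotProduct_mulVec_nonneg x)

lemma conj_diag_psd (V : Matrix (Fin p) (Fin p) ℝ) {d : Fin p → ℝ} (hd : ∀ i, 0 ≤ d i) :
    (V * Matrix.diagonal d * star V).PosSemidef := by
  rw [Matrix.star_eq_conjTranspose]
  exact (Matrix.posSemidef_diagonal_iff.mpr hd).mul_mul_conjTranspose_same V

lemma spectral_real {A : Matrix (Fin p) (Fin p) ℝ} (hA : A.IsHermitian) :
    A = (hA.eigenvectorUnitary : Matrix (Fin p) (Fin p) ℝ) * Matrix.diagonal hA.eigenvalues *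
      star (hA.eigenvectorUnitary : Matrix (Fin p) (Fin p) ℝ) := by
  have h := hA.spectral_theorem
  rwa [RCLike.ofReal_real_eq_id, Function.id_comp] at h

lemma psd_of_eigenvalues_ge {A : Matrix (Fin p) (Fin p) ℝ} (hA : A.IsHermitian) {c : ℝ}
    (h : ∀ i, c ≤ hA.eigenvalues i) : (A - c • 1).PosSemidef := by
  have hVV : (hA.eigenvectorUnitary : Matrix (Fin p) (Fin p) ℝ) *
      star (hA.eigenvectorUnitary : Matrix (Fin p) (Fin p) ℝ) = 1 :=
    Matrix.mem_unitaryGroup_iff.mp hA.eigenvectorUnitary.2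
  have hEq : A - c • 1 = (hA.eigenvectorUnitary : Matrix (Fin p) (Fin p) ℝ) *
      Matrix.diagonal (fun i => hA.eigenvalues i - c) *
      star (hA.eigenvectorUnitary : Matrix (Fin p) (Fin p) ℝ) := by
    have h1 : Matrix.diagonal (fun i => hA.eigenvalues i - c)
        = Matrix.diagonal hA.eigenvalues - c • 1 := by
      rw [Matrix.smul_one_eq_diagonal, ← Matrix.diagonal_sub]
    rw [h1, Matrix.mul_sub, Matrix.sub_mul, ← spectral_real hA, mul_smul_comm, mul_one,
      smul_mul_assoc, hVV]
  rw [hEq]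
  exact conj_diag_psd _ (fun i => sub_nonneg.2 (h i))

lemma psd_of_eigenvalues_le {A : Matrix (Fin p) (Fin p) ℝ} (hA : A.IsHermitian) {c : ℝ}
    (h : ∀ i, hA.eigenvalues i ≤ c) : (c • 1 - A).PosSemidef := by
  have hVV : (hA.eigenvectorUnitary : Matrix (Fin p) (Fin p) ℝ) *
      star (hA.eigenvectorUnitary : Matrix (Fin p) (Fin p) ℝ) = 1 :=
    Matrix.mem_unitaryGroup_iff.mp hA.eigenvectorUnitary.2
  have hEq : c • 1 - A = (hA.eigenvectorUnitary : Matrix (Fin p) (Fin p) ℝ) *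
      Matrix.diagonal (fun i => c - hA.eigenvalues i) *
      star (hA.eigenvectorUnitary : Matrix (Fin p) (Fin p) ℝ) := by
    have h1 : Matrix.diagonal (fun i => c - hA.eigenvalues i)
        = c • 1 - Matrix.diagonal hA.eigenvalues := by
      rw [Matrix.smul_one_eq_diagonal, ← Matrix.diagonal_sub]
    rw [h1, Matrix.mul_sub, Matrix.sub_mul, ← spectral_real hA, mul_smul_comm, mul_one,
      smul_mul_assoc, hVV]
  rw [hEq]
  exact conj_diag_psd _ (fun i => sub_nonneg.2 (h i))

lemma eigenvalues_ge_of_psd {A : Matrix (Fin p) (Fin p) ℝ} (hA : A.IsHermitian) {c : ℝ}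
    (h : (A - c • 1).PosSemidef) (i : Fin p) : c ≤ hA.eigenvalues i := by
  set v : Fin p → ℝ := ⇑(hA.eigenvectorBasis i) with hv
  have hv1 : v ⬝ᵥ v = 1 := by
    have hn : ‖hA.eigenvectorBasis i‖ = 1 := hA.eigenvectorBasis.orthonormal.1 i
    have h2 : ‖hA.eigenvectorBasis i‖ ^ 2 = 1 := by rw [hn]; norm_num
    rw [EuclideanSpace.norm_eq, Real.sq_sqrt (by positivity)] at h2
    simpa [dotProduct, Real.norm_eq_abs, sq_abs, pow_two] using h2
  have hq := h.dotProduct_mulVec_nonneg v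
  rw [star_vec, Matrix.sub_mulVec, hA.mulVec_eigenvectorBasis i, Matrix.smul_mulVec,
    Matrix.one_mulVec] at hq
  simp only [dotProduct_sub, dotProduct_smul, hv1, smul_eq_mul, mul_one] at hq
  rw [← hv, hv1, mul_one] at hq
  linarith

lemma scalar_ineq {s t α lam c : ℝ} (hα0 : 0 < α) (hl0 : 0 < lam) (hli : α ≤ lam)
    (h1s : 0 < 1 - s) (hs1 : t ≤ (1-s)*α^2) (ht0 : 0 < t)
    (hαα : α * α⁻¹ = 1) (hc' : c = (1-s)*α + t*α⁻¹) :
    0 ≤ (1-s)*lam + t*lam⁻¹ - c := by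
  have hkey : (1-s)*lam + t*lam⁻¹ - ((1-s)*α + t*α⁻¹)
      = (lam - α) * ((1-s) - t*(lam⁻¹*α⁻¹)) := by
    field_simp
    ring
  have htla : t ≤ (1-s)*(lam*α) := by nlinarith
  have hfac : t*(lam⁻¹*α⁻¹) ≤ 1 - s := by
    have hpos : (0:ℝ) < lam⁻¹*α⁻¹ := by positivity
    have h2 := mul_le_mul_of_nonneg_right htla hpos.le
    calc t*(lam⁻¹*α⁻¹) ≤ (1-s)*(lam*α)*(lam⁻¹*α⁻¹) := h2
      _ = (1-s) * ((lam*lam⁻¹) * (α*α⁻¹)) := by ring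
      _ = 1 - s := by rw [mul_inv_cancel₀ hl0.ne', hαα, mul_one, mul_one]
  have h3 : 0 ≤ (1-s)*lam + t*lam⁻¹ - ((1-s)*α + t*α⁻¹) := by
    rw [hkey]
    exact mul_nonneg (by linarith) (by linarith)
  rw [hc']
  linarith

lemma sft_entry_bound (a τ : ℝ) (hτ : 0 ≤ τ) :
    |Real.sign a * max (|a| - τ) 0 - a| ≤ τ := by
  rcases lt_trichotomy a 0 with h|h|h
  · rw [Real.sign_of_neg h, abs_of_neg h]
    rcases max_cases (-a - τ) 0 with ⟨he, hc⟩|⟨he, hc⟩ <;> rw [he, abs_le] <;>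
      constructor <;> nlinarith
  · subst h
    simp [Real.sign_zero, hτ]
  · rw [Real.sign_of_pos h, abs_of_pos h]
    rcases max_cases (a - τ) 0 with ⟨he, hc⟩|⟨he, hc⟩ <;> rw [he, abs_le] <;>
      constructor <;> nlinarith

end Stmt12Aux

set_option maxHeartbeats 1000000

/-- the GEN-ISTA update preserves the lower bound αI. -/
theorem stmt12 {p : ℕ} (hp : 0 < p)
    (S : Matrix (Fin p) (Fin p) ℝ) (hS : S.IsHermitian)
    (γ1 γ2 : ℝ) (hγ1 : 0 < γ1) (hγ2 : 0 < γ2)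
    (α : ℝ)
    (hα : α⁻¹ = (maxEig S + γ1 * p + Real.sqrt ((maxEig S + γ1 * p)^2 + 8*γ2)) / 2)
    (b' : ℝ) (hαb : α < b')
    (Ωk : Matrix (Fin p) (Fin p) ℝ) (hΩk : Ωk.PosDef)
    (hl : loewnerLE (α • (1 : Matrix (Fin p) (Fin p) ℝ)) Ωk)
    (hu : loewnerLE Ωk (b' • (1 : Matrix (Fin p) (Fin p) ℝ)))
    (t : ℝ) (ht0 : 0 < t) (ht : t ≤ α^2 / (2*γ2*α^2 + 1)) :
    loewnerLE (α • (1 : Matrix (Fin p) (Fin p) ℝ))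
      (Sft (Ωk - t • (S - Ωk⁻¹ + (2*γ2) • Ωk)) (t*γ1)) := by
  classical
  -- scalar facts about α
  set c0 : ℝ := maxEig S + γ1 * p with hc0
  have hsqlt : Real.sqrt (c0^2) < Real.sqrt (c0^2 + 8*γ2) :=
    Real.sqrt_lt_sqrt (sq_nonneg _) (by linarith)
  have habs : Real.sqrt (c0^2) = |c0| := Real.sqrt_sq_eq_abs c0
  have hαinvpos : 0 < α⁻¹ := by
    rw [hα]
    have h1 := neg_abs_le c0
    rw [habs] at hsqlt
    linarith
  have hα0 : 0 < α := inv_pos.mp hαinvpos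
  have hsqrt_sq : Real.sqrt (c0^2 + 8*γ2) ^ 2 = c0^2 + 8*γ2 :=
    Real.sq_sqrt (by positivity)
  have hroot : 2*α⁻¹ - c0 = Real.sqrt (c0^2+8*γ2) := by rw [hα]; ring
  have hquad : α⁻¹*α⁻¹ - c0*α⁻¹ - 2*γ2 = 0 := by
    have h2 : (2*α⁻¹ - c0)^2 = c0^2 + 8*γ2 := by rw [hroot]; exact hsqrt_sq
    linear_combination h2 / 4
  have hαα : α * α⁻¹ = 1 := mul_inv_cancel₀ hα0.ne'
  have hid : α⁻¹ = c0 + 2*γ2*α := by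
    linear_combination α * hquad + (c0 - α⁻¹) * hαα
  -- step size facts
  set s : ℝ := 2*γ2*t with hsdef
  have hD : (0:ℝ) < 2*γ2*α^2 + 1 := by positivity
  have htD : t * (2*γ2*α^2+1) ≤ α^2 := (le_div_iff₀ hD).mp ht
  have hs1 : t ≤ (1 - s)*α^2 := by rw [hsdef]; nlinarith
  have h1s : 0 < 1 - s := by nlinarith
  -- eigenvalues of Ωk
  have hΩh : Ωk.IsHermitian := hΩk.1
  have hlampos : ∀ i, 0 < hΩh.eigenvalues i := fun i => hΩk.eigenvalues_pos i
  have hl' : (Ωk - α • 1).PosSemidef := hl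
  have hlamge : ∀ i, α ≤ hΩh.eigenvalues i := fun i =>
    Stmt12Aux.eigenvalues_ge_of_psd hΩh hl' i
  -- spectral decomposition of Ωk and its inverse
  set V : Matrix (Fin p) (Fin p) ℝ := (hΩh.eigenvectorUnitary : Matrix (Fin p) (Fin p) ℝ)
    with hVdef
  have hVV : V * star V = 1 := Matrix.mem_unitaryGroup_iff.mp hΩh.eigenvectorUnitary.2
  have hVV' : star V * V = 1 := Matrix.mem_unitaryGroup_iff'.mp hΩh.eigenvectorUnitary.2
  have hΩspec : Ωk = V * Matrix.diagonal hΩh.eigenvalues * star V := Stmt12Aux.spectral_real hΩh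
  have hDD' : Matrix.diagonal hΩh.eigenvalues *
      Matrix.diagonal (fun i => (hΩh.eigenvalues i)⁻¹) = 1 := by
    rw [Matrix.diagonal_mul_diagonal]
    have he : (fun i => hΩh.eigenvalues i * (hΩh.eigenvalues i)⁻¹) = fun _ => (1:ℝ) :=
      funext fun i => mul_inv_cancel₀ (hlampos i).ne'
    rw [he, Matrix.diagonal_one]
  have hinv : Ωk⁻¹ = V * Matrix.diagonal (fun i => (hΩh.eigenvalues i)⁻¹) * star V := by
    apply Matrix.inv_eq_right_inv
    calc Ωk * (V * Matrix.diagonal (fun i => (hΩh.eigenvalues i)⁻¹) * star V)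
        = (V * Matrix.diagonal hΩh.eigenvalues * star V) *
          (V * Matrix.diagonal (fun i => (hΩh.eigenvalues i)⁻¹) * star V) := by
          rw [← hΩspec]
      _ = V * (Matrix.diagonal hΩh.eigenvalues * (star V * V) *
            Matrix.diagonal (fun i => (hΩh.eigenvalues i)⁻¹)) * star V := by
          simp only [Matrix.mul_assoc]
      _ = 1 := by rw [hVV', mul_one, hDD', mul_one, hVV]
  -- the constant c and its alternative form
  set c : ℝ := α + t * maxEig S + (t*γ1) * p with hcdef
  have hc' : c = (1-s)*α + t*α⁻¹ := by
    rw [hcdef, hsdef, hid, hc0]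
    ring
  have hf : ∀ i, 0 ≤ (1-s) * hΩh.eigenvalues i + t * (hΩh.eigenvalues i)⁻¹ - c :=
    fun i => Stmt12Aux.scalar_ineq hα0 (hlampos i) (hlamge i) h1s hs1 ht0 hαα hc'
  -- piece 3
  set f : Fin p → ℝ := fun i => (1-s) * hΩh.eigenvalues i + t * (hΩh.eigenvalues i)⁻¹ - c
    with hfdef
  have hdiagf : Matrix.diagonal f = (1-s) • Matrix.diagonal hΩh.eigenvalues
      + t • Matrix.diagonal (fun i => (hΩh.eigenvalues i)⁻¹) - c • 1 := by
    rw [← Matrix.diagonal_smul, ← Matrix.diagonal_smul, Matrix.diagonal_add,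
      Matrix.smul_one_eq_diagonal, Matrix.diagonal_sub, hfdef]
    simp [smul_eq_mul]
  have hP3eq : V * Matrix.diagonal f * star V
      = (1-s) • Ωk + t • Ωk⁻¹ - c • 1 := by
    rw [hdiagf, Matrix.mul_sub, Matrix.sub_mul, Matrix.mul_add, Matrix.add_mul,
      mul_smul_comm, mul_smul_comm, mul_smul_comm, mul_one, smul_mul_assoc, smul_mul_assoc,
      smul_mul_assoc, hVV, ← hΩspec, ← hinv]
  have hP3 : ((1-s) • Ωk + t • Ωk⁻¹ - c • 1).PosSemidef := by
    rw [← hP3eq]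
    exact Stmt12Aux.conj_diag_psd V hf
  -- piece 2
  have hρge : ∀ i, hS.eigenvalues i ≤ maxEig S := by
    intro i
    rw [maxEig, dif_pos hS]
    exact le_ciSup (Set.Finite.bddAbove (Set.finite_range _)) i
  have hP2 : (t • ((maxEig S) • (1 : Matrix (Fin p) (Fin p) ℝ) - S)).PosSemidef :=
    Stmt12Aux.psd_smul ht0.le (Stmt12Aux.psd_of_eigenvalues_le hS hρge)
  -- piece 1
  set M : Matrix (Fin p) (Fin p) ℝ := Ωk - t • (S - Ωk⁻¹ + (2*γ2) • Ωk) with hMdef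
  have hτ : (0:ℝ) ≤ t*γ1 := by positivity
  have hMherm : M.IsHermitian := by
    rw [hMdef]
    exact hΩh.sub (Stmt12Aux.herm_smul t ((hS.sub hΩh.inv).add (Stmt12Aux.herm_smul _ hΩh)))
  have hSftherm : (Sft M (t*γ1)).IsHermitian := by
    apply Matrix.IsHermitian.ext
    intro i j
    rw [star_trivial]
    have hsym : M j i = M i j := by rw [← hMherm.apply i j, star_trivial]
    simp [Sft, hsym]
  have hEbound : ∀ i j, |(Sft M (t*γ1) - M) i j| ≤ t*γ1 := by
    intro i j
    simp only [Matrix.sub_apply, Sft, Matrix.of_apply]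
    exact Stmt12Aux.sft_entry_bound (M i j) _ hτ
  have hP1 : (Sft M (t*γ1) - M + ((t*γ1) * p) • 1).PosSemidef := by
    refine Matrix.PosSemidef.of_dotProduct_mulVec_nonneg ?_ ?_
    · exact (hSftherm.sub hMherm).add (Stmt12Aux.herm_smul _ Matrix.isHermitian_one)
    · intro x
      rw [Stmt12Aux.star_vec]
      rw [Matrix.add_mulVec, dotProduct_add, Matrix.smul_mulVec, Matrix.one_mulVec,
        dotProduct_smul, smul_eq_mul]
      set E := Sft M (t*γ1) - M with hEdef
      have hmv : ∀ i, (E *ᵥ x) i = ∑ j, E i j * x j := fun i => rfl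
      have hdp : x ⬝ᵥ (E *ᵥ x) = ∑ i, x i * (E *ᵥ x) i := rfl
      have hquadb : |x ⬝ᵥ (E *ᵥ x)| ≤ (t*γ1) * (∑ i, |x i|)^2 := by
        calc |x ⬝ᵥ (E *ᵥ x)| = |∑ i, x i * (E *ᵥ x) i| := by rw [hdp]
          _ ≤ ∑ i, |x i * (E *ᵥ x) i| := Finset.abs_sum_le_sum_abs _ _
          _ ≤ ∑ i, |x i| * ((t*γ1) * ∑ j, |x j|) := by
              apply Finset.sum_le_sum
              intro i _
              rw [abs_mul]
              apply mul_le_mul_of_nonneg_left _ (abs_nonneg _)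
              calc |(E *ᵥ x) i| = |∑ j, E i j * x j| := by rw [hmv]
                _ ≤ ∑ j, |E i j * x j| := Finset.abs_sum_le_sum_abs _ _
                _ ≤ ∑ j, (t*γ1) * |x j| := by
                    apply Finset.sum_le_sum
                    intro j _
                    rw [abs_mul]
                    exact mul_le_mul_of_nonneg_right (hEbound i j) (abs_nonneg _)
                _ = (t*γ1) * ∑ j, |x j| := by rw [Finset.mul_sum]
          _ = (t*γ1) * (∑ i, |x i|)^2 := by
              rw [← Finset.sum_mul]
              ring
      have hcs : (∑ i, |x i|)^2 ≤ (p:ℝ) * ∑ i, (x i)^2 := by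
        have := sq_sum_le_card_mul_sum_sq (s := Finset.univ) (f := fun i : Fin p => |x i|)
        simpa [sq_abs] using this
      have hxx : x ⬝ᵥ x = ∑ i, (x i)^2 := by
        simp [dotProduct, pow_two]
      have h1 : -((t*γ1) * ((p:ℝ) * ∑ i, (x i)^2)) ≤ x ⬝ᵥ (E *ᵥ x) := by
        have h2 : (t*γ1) * (∑ i, |x i|)^2 ≤ (t*γ1) * ((p:ℝ) * ∑ i, (x i)^2) :=
          mul_le_mul_of_nonneg_left hcs hτ
        have := neg_abs_le (x ⬝ᵥ (E *ᵥ x))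
        linarith
      rw [hxx]
      push_cast
      nlinarith [h1]
  -- assembling
  show (Sft M (t*γ1) - α • 1).PosSemidef
  have hsum : Sft M (t*γ1) - α • (1 : Matrix (Fin p) (Fin p) ℝ)
      = (Sft M (t*γ1) - M + ((t*γ1) * p) • 1)
        + (t • ((maxEig S) • (1 : Matrix (Fin p) (Fin p) ℝ) - S)
          + ((1-s) • Ωk + t • Ωk⁻¹ - c • 1)) := by
    rw [hMdef, hcdef, hsdef]
    module
  rw [hsum]
  exact hP1.add (hP2.add hP3)
end
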